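/- arXiv:1602.01500 — 4 statements merged into one kernel-verified Lean document; each statement's English description precedes it below -/
import Mathlib

section
/- For 0 < q < 1 and a function f defined on the q-geometric set A_{q,b} = {b q^n : n ≥ 0}, the right-sided Riemann–Liouville q-fractional integral at x = b q^m equals b^α (1-q)^α ∑_{j=0}^m q^{jα} ((q^α;q)_{m-j}/(q;q)_{m-j}) f(b q^j). -/
open Filter

noncomputable section

namespace QFrac

variable (q : ℝ)

/-- infinite q-shifted factorial `(z;q)_∞` -/
def pochInf (z : ℝ) : ℝ := ∏' n : ℕ, (1 - z * q ^ n)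

/-- generalized q-shifted factorial `(z;q)_ν = (z;q)_∞ / (z q^ν;q)_∞` -/
def poch (z ν : ℝ) : ℝ := pochInf q z / pochInf q (z * q ^ ν)

/-- finite q-shifted factorial `(z;q)_k` -/
def pochN (z : ℝ) (k : ℕ) : ℝ := ∏ i ∈ Finset.range k, (1 - z * q ^ i)

/-- q-Gamma function -/
def qGamma (α : ℝ) : ℝ := pochInf q q / pochInf q (q ^ α) * (1 - q) ^ (1 - α)

/-- Jackson q-integral `∫_0^a f(t) d_q t` -/
def jackson (a : ℝ) (f : ℝ → ℝ) : ℝ := (1 - q) * a * ∑' n : ℕ, q ^ n * f (a * q ^ n)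

/-- Jackson q-integral `∫_c^b f(t) d_q t` -/
def jacksonI (c b : ℝ) (f : ℝ → ℝ) : ℝ := jackson q b f - jackson q c f

/-- left-sided Riemann–Liouville q-fractional integral `I^α_{q,0^+}` -/
def Ileft (α : ℝ) (f : ℝ → ℝ) (x : ℝ) : ℝ :=
  x ^ (α - 1) / qGamma q α * jackson q x (fun t => poch q (q * t / x) (α - 1) * f t)

/-- right-sided Riemann–Liouville q-fractional integral `I^α_{q,b^-}` -/
def Iright (b α : ℝ) (f : ℝ → ℝ) (x : ℝ) : ℝ :=
  (qGamma q α)⁻¹ *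
    jacksonI q (q * x) b (fun t => t ^ (α - 1) * poch q (q * x / t) (α - 1) * f t)

/-- Jackson q-derivative -/
def Dq (f : ℝ → ℝ) (x : ℝ) : ℝ := (f x - f (q * x)) / ((1 - q) * x)

/-- Jackson `q⁻¹`-derivative -/
def Dqinv (f : ℝ → ℝ) (x : ℝ) : ℝ := (f x - f (x / q)) / ((1 - q⁻¹) * x)

/-- left-sided Caputo q-fractional derivative of order `α ∈ (0,1)` -/
def CDleft (α : ℝ) (f : ℝ → ℝ) : ℝ → ℝ := Ileft q (1 - α) (Dq q f)

/-- left-sided Riemann–Liouville q-fractional derivative of order `α ∈ (0,1)` -/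
def DRLleft (α : ℝ) (f : ℝ → ℝ) : ℝ → ℝ := Dq q (Ileft q (1 - α) f)

/-- right-sided Riemann–Liouville q-fractional derivative of order `α ∈ (0,1)` -/
def DRLright (b α : ℝ) (f : ℝ → ℝ) (x : ℝ) : ℝ :=
  (-1 / q) * Dqinv q (fun t => Iright q b (1 - α) f t) x

/-- right-sided Caputo q-fractional derivative of order `α ∈ (0,1)` -/
def CDright (b α : ℝ) (f : ℝ → ℝ) (x : ℝ) : ℝ :=
  (-1 / q) * Iright q b (1 - α) (Dqinv q f) x

/-- `f ∈ L¹_q(A^*_{q,a})` -/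
def MemL1 (a : ℝ) (f : ℝ → ℝ) : Prop := Summable (fun n : ℕ => q ^ n * |f (a * q ^ n)|)

/-- `f ∈ L²_q(A^*_{q,a})` -/
def MemL2 (a : ℝ) (f : ℝ → ℝ) : Prop := Summable (fun n : ℕ => q ^ n * (f (a * q ^ n)) ^ 2)

/-- the `L²_q` norm -/
def norm2 (a : ℝ) (f : ℝ → ℝ) : ℝ := Real.sqrt (jackson q a (fun t => (f t) ^ 2))

/-- `f` is q-regular at zero (its value at `0` is the limit along the q-grid) -/
def qRegular (a : ℝ) (f : ℝ → ℝ) : Prop :=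
  Tendsto (fun n : ℕ => f (a * q ^ n)) atTop (nhds (f 0))

/-- the limit at zero along the q-grid exists -/
def qRegular' (a : ℝ) (f : ℝ → ℝ) : Prop :=
  ∃ L : ℝ, Tendsto (fun n : ℕ => f (a * q ^ n)) atTop (nhds L)

/-- sup norm on `A^*_{q,a}` -/
def supNorm (a : ℝ) (f : ℝ → ℝ) : ℝ := max (⨆ n : ℕ, |f (a * q ^ n)|) |f 0|

/-- bounded q-variation part of q-absolute continuity -/
def qACvar (a : ℝ) (f : ℝ → ℝ) : Prop :=
  ∃ K : ℝ, ∀ m N : ℕ,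
    ∑ j ∈ Finset.range N, |f (a * q ^ (m + j)) - f (a * q ^ (m + j + 1))| ≤ K

/-- q-absolute continuity on `A^*_{q,a}` -/
def qAC (a : ℝ) (f : ℝ → ℝ) : Prop := qRegular q a f ∧ qACvar q a f

/-- little q-Jacobi polynomial `p_n(x; q^A, q^B | q)` -/
def littleJacobi (n : ℕ) (A B x : ℝ) : ℝ :=
  ∑ k ∈ Finset.range (n + 1),
    pochN q (q ^ (-(n : ℝ))) k * pochN q (q ^ (A + B + (n : ℝ) + 1)) k /
      (pochN q (q ^ (A + 1)) k * pochN q q k) * (q * x) ^ k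

end QFrac


section Aux

open Filter Finset

variable {q z : ℝ}

theorem qfacts (hq : 0 < q) (hq1 : q < 1) (hz0 : 0 ≤ z) (hz1 : z ≤ 1) (i : ℕ) :
    0 ≤ 1 - z * q ^ i ∧ 1 - z * q ^ i ≤ 1 := by
  have h1 : z * q ^ i ≤ 1 := by
    calc z * q ^ i ≤ 1 * 1 ^ i := by
          apply mul_le_mul hz1 (pow_le_pow_left₀ hq.le hq1.le i) (by positivity) zero_le_one
      _ = 1 := by simp
  have h2 : 0 ≤ z * q ^ i := by positivity
  constructor <;> linarith

theorem hasProdA (hq : 0 < q) (hq1 : q < 1) (hz0 : 0 ≤ z) (hz1 : z ≤ 1) :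
    HasProd (fun n : ℕ => 1 - z * q ^ n) (⨅ s : Finset ℕ, ∏ i ∈ s, (1 - z * q ^ i)) := by
  have hanti : Antitone (fun s : Finset ℕ => ∏ i ∈ s, (1 - z * q ^ i)) := by
    intro s t hst
    have h1 : ∏ i ∈ t \ s, (1 - z * q ^ i) ≤ 1 :=
      Finset.prod_le_one (fun i _ => (qfacts hq hq1 hz0 hz1 i).1)
        (fun i _ => (qfacts hq hq1 hz0 hz1 i).2)
    have h2 : (0:ℝ) ≤ ∏ i ∈ s, (1 - z * q ^ i) :=
      Finset.prod_nonneg (fun i _ => (qfacts hq hq1 hz0 hz1 i).1)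
    calc ∏ i ∈ t, (1 - z * q ^ i)
        = (∏ i ∈ t \ s, (1 - z * q ^ i)) * ∏ i ∈ s, (1 - z * q ^ i) :=
          (Finset.prod_sdiff hst).symm
      _ ≤ 1 * ∏ i ∈ s, (1 - z * q ^ i) := mul_le_mul_of_nonneg_right h1 h2
      _ = _ := one_mul _
  have hbdd : BddBelow (Set.range fun s : Finset ℕ => ∏ i ∈ s, (1 - z * q ^ i)) := by
    refine ⟨0, ?_⟩
    rintro x ⟨s, rfl⟩
    exact Finset.prod_nonneg (fun i _ => (qfacts hq hq1 hz0 hz1 i).1)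
  exact tendsto_atTop_ciInf hanti hbdd

theorem multA (hq : 0 < q) (hq1 : q < 1) (hz0 : 0 ≤ z) (hz1 : z ≤ 1) :
    Multipliable (fun n : ℕ => 1 - z * q ^ n) :=
  ⟨_, hasProdA hq hq1 hz0 hz1⟩

theorem pochInf_split (hq : 0 < q) (hq1 : q < 1) (hz0 : 0 ≤ z) (hz1 : z ≤ 1) (k : ℕ) :
    QFrac.pochInf q z = QFrac.pochN q z k * QFrac.pochInf q (z * q ^ k) := by
  have hz0' : 0 ≤ z * q ^ k := by positivity
  have hz1' : z * q ^ k ≤ 1 := by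
    calc z * q ^ k ≤ z * 1 :=
          mul_le_mul_of_nonneg_left (pow_le_one₀ hq.le hq1.le) hz0
      _ ≤ 1 := by linarith
  have hm : Multipliable (fun n : ℕ => (1 - z * q ^ (n + k))) := by
    refine (multA hq hq1 hz0' hz1').congr fun n => ?_
    rw [pow_add]; ring
  have h := Multipliable.prod_mul_tprod_nat_mul' (f := fun n : ℕ => 1 - z * q ^ n) (k := k) hm
  rw [QFrac.pochInf, ← h, QFrac.pochN, QFrac.pochInf]
  congr 1
  refine tprod_congr fun n => ?_
  simp only [pow_add]; ring

theorem prod_one_sub_ge (s : Finset ℕ) (a : ℕ → ℝ) (h0 : ∀ i, 0 ≤ a i) (h1 : ∀ i, a i ≤ 1) :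
    1 - ∑ i ∈ s, a i ≤ ∏ i ∈ s, (1 - a i) := by
  induction s using Finset.cons_induction with
  | empty => simp
  | cons j s hj ih =>
      rw [Finset.prod_cons, Finset.sum_cons]
      have hs0 : 0 ≤ ∑ i ∈ s, a i := Finset.sum_nonneg fun i _ => h0 i
      nlinarith [h0 j, h1 j, ih]

theorem pochN_pos (hq : 0 < q) (hq1 : q < 1) (hz0 : 0 ≤ z) (hz1 : z < 1) (k : ℕ) :
    0 < QFrac.pochN q z k := by
  refine Finset.prod_pos fun i _ => ?_
  have : z * q ^ i ≤ z * 1 := mul_le_mul_of_nonneg_left (pow_le_one₀ hq.le hq1.le) hz0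
  simp only [mul_one] at this
  linarith

theorem pochInf_pos (hq : 0 < q) (hq1 : q < 1) (hz0 : 0 ≤ z) (hz1 : z < 1) :
    0 < QFrac.pochInf q z := by
  have base : ∀ w : ℝ, 0 ≤ w → w < 1 - q → 0 < QFrac.pochInf q w := by
    intro w hw0 hw1
    have hw1' : w ≤ 1 := by linarith
    have hp := hasProdA (z := w) hq hq1 hw0 hw1'
    have hbound : ∀ s : Finset ℕ, 1 - w / (1 - q) ≤ ∏ i ∈ s, (1 - w * q ^ i) := by
      intro s
      have hsum : ∑ i ∈ s, w * q ^ i ≤ w / (1 - q) := by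
        have h1 : ∑ i ∈ s, w * q ^ i = w * ∑ i ∈ s, q ^ i := by rw [Finset.mul_sum]
        have h2 : ∑ i ∈ s, q ^ i ≤ ∑' i : ℕ, q ^ i :=
          Summable.sum_le_tsum s (fun i _ => by positivity)
            (summable_geometric_of_lt_one hq.le hq1)
        rw [tsum_geometric_of_lt_one hq.le hq1] at h2
        rw [h1, div_eq_mul_inv]
        exact mul_le_mul_of_nonneg_left h2 hw0
      have h3 := prod_one_sub_ge s (fun i => w * q ^ i) (fun i => by positivity)
        (fun i => by show w * q ^ i ≤ 1; linarith [(qfacts hq hq1 hw0 hw1' i).1])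
      linarith
    have hpos : 0 < 1 - w / (1 - q) := by
      rw [sub_pos, div_lt_one (by linarith)]
      exact hw1
    have hle : 1 - w / (1 - q) ≤ QFrac.pochInf q w := by
      rw [QFrac.pochInf, hp.tprod_eq]
      exact le_ciInf hbound
    linarith
  obtain ⟨N, hN⟩ : ∃ N : ℕ, q ^ N < 1 - q :=
    exists_pow_lt_of_lt_one (by linarith : (0:ℝ) < 1 - q) hq1
  rw [pochInf_split hq hq1 hz0 hz1.le N]
  have h1 : 0 < QFrac.pochN q z N := pochN_pos hq hq1 hz0 hz1 N
  have h2 : 0 < QFrac.pochInf q (z * q ^ N) := by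
    refine base _ (by positivity) ?_
    calc z * q ^ N ≤ 1 * q ^ N := by
          apply mul_le_mul_of_nonneg_right hz1.le (by positivity)
      _ = q ^ N := one_mul _
      _ < 1 - q := hN
  positivity

theorem pochInf_eq_zero (hex : ∃ n : ℕ, z * q ^ n = 1) : QFrac.pochInf q z = 0 := by
  obtain ⟨n, hn⟩ := hex
  have hp : HasProd (fun k : ℕ => 1 - z * q ^ k) 0 := by
    have hev : ∀ᶠ s : Finset ℕ in atTop, ∏ i ∈ s, (1 - z * q ^ i) = 0 := by
      filter_upwards [eventually_ge_atTop ({n} : Finset ℕ)] with s hs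
      exact Finset.prod_eq_zero (Finset.singleton_subset_iff.mp hs) (by rw [hn]; ring)
    exact tendsto_const_nhds.congr' (hev.mono fun s h => h.symm)
  exact hp.tprod_eq

theorem gamma_poch {α : ℝ} (hq : 0 < q) (hq1 : q < 1) (hα : 0 < α) (k : ℕ) :
    (QFrac.qGamma q α)⁻¹ * QFrac.poch q (q ^ (k + 1)) (α - 1) =
      (1 - q) ^ (α - 1) * (QFrac.pochN q (q ^ α) k / QFrac.pochN q q k) := by
  have hq1' : (0:ℝ) < 1 - q := by linarith
  have hqa0 : (0:ℝ) ≤ q ^ α := (Real.rpow_pos_of_pos hq α).le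
  have hqa1 : q ^ α < 1 := Real.rpow_lt_one hq.le hq1 hα
  have hA : QFrac.pochInf q q = QFrac.pochN q q k * QFrac.pochInf q (q ^ (k + 1)) := by
    rw [pochInf_split hq hq1 hq.le hq1.le k, pow_succ, mul_comm q (q ^ k)]
  have hB : QFrac.pochInf q (q ^ α) =
      QFrac.pochN q (q ^ α) k * QFrac.pochInf q (q ^ α * q ^ k) :=
    pochInf_split hq hq1 hqa0 hqa1.le k
  have hC : (q ^ (k + 1) : ℝ) * q ^ (α - 1) = q ^ α * q ^ (k : ℕ) := by
    rw [← Real.rpow_natCast q (k + 1), ← Real.rpow_natCast q k,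
      ← Real.rpow_add hq, ← Real.rpow_add hq]
    congr 1
    push_cast; ring
  have hP1 : 0 < QFrac.pochInf q (q ^ (k + 1)) :=
    pochInf_pos hq hq1 (by positivity) (pow_lt_one₀ hq.le hq1 (Nat.succ_ne_zero k))
  have hP2 : 0 < QFrac.pochInf q (q ^ α * q ^ k) := by
    refine pochInf_pos hq hq1 (by positivity) ?_
    calc q ^ α * q ^ k ≤ q ^ α * 1 :=
          mul_le_mul_of_nonneg_left (pow_le_one₀ hq.le hq1.le) hqa0
      _ < 1 := by rw [mul_one]; exact hqa1
  have hN1 : 0 < QFrac.pochN q q k := pochN_pos hq hq1 hq.le hq1 k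
  have hN2 : 0 < QFrac.pochN q (q ^ α) k := pochN_pos hq hq1 hqa0 hqa1 k
  have hc : ((1 - q : ℝ) ^ (1 - α))⁻¹ = (1 - q) ^ (α - 1) := by
    rw [← Real.rpow_neg hq1'.le, neg_sub]
  have hcpos : (0:ℝ) < (1 - q) ^ (1 - α) := Real.rpow_pos_of_pos hq1' _
  rw [QFrac.qGamma, QFrac.poch, hC, hA, hB, mul_inv, hc]
  field_simp

end Aux

/-- series representation of the right-sided q-fractional integral
on the grid `A_{q,b}`. -/
theorem stmt0 (q b α : ℝ) (hq : 0 < q) (hq1 : q < 1) (hb : 0 < b) (hα : 0 < α)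
    (f : ℝ → ℝ) (m : ℕ) :
    QFrac.Iright q b α f (b * q ^ m) =
      b ^ α * (1 - q) ^ α *
        ∑ j ∈ Finset.range (m + 1),
          q ^ ((j : ℝ) * α) *
            (QFrac.pochN q (q ^ α) (m - j) / QFrac.pochN q q (m - j)) * f (b * q ^ j) := by
  have hb' : b ≠ 0 := hb.ne'
  have hq' : q ≠ 0 := hq.ne'
  have hq1' : (0:ℝ) < 1 - q := by linarith
  set g : ℝ → ℝ :=
    fun t => t ^ (α - 1) * QFrac.poch q (q * (b * q ^ m) / t) (α - 1) * f t with hg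
  have hzero : ∀ n : ℕ, m + 1 ≤ n →
      QFrac.poch q (q * (b * q ^ m) / (b * q ^ n)) (α - 1) = 0 := by
    intro n hn
    have harg : q * (b * q ^ m) / (b * q ^ n) * q ^ (n - (m + 1)) = 1 := by
      rw [div_mul_eq_mul_div, div_eq_one_iff_eq (by positivity)]
      have h1 : q * (b * q ^ m) * q ^ (n - (m + 1)) = b * (q ^ (m + 1) * q ^ (n - (m + 1))) := by
        rw [pow_succ]; ring
      rw [h1, ← pow_add, show m + 1 + (n - (m + 1)) = n from by omega]
    rw [QFrac.poch, pochInf_eq_zero ⟨n - (m + 1), harg⟩, zero_div]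
  have hzero2 : ∀ n : ℕ,
      QFrac.poch q (q * (b * q ^ m) / (q * (b * q ^ m) * q ^ n)) (α - 1) = 0 := by
    intro n
    have harg : q * (b * q ^ m) / (q * (b * q ^ m) * q ^ n) * q ^ n = 1 := by
      field_simp
    rw [QFrac.poch, pochInf_eq_zero ⟨n, harg⟩, zero_div]
  simp only [QFrac.Iright, QFrac.jacksonI, QFrac.jackson]
  have h2 : ∑' n : ℕ, q ^ n * ((q * (b * q ^ m) * q ^ n) ^ (α - 1) *
      QFrac.poch q (q * (b * q ^ m) / (q * (b * q ^ m) * q ^ n)) (α - 1) *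
      f (q * (b * q ^ m) * q ^ n)) = 0 := by
    have hz : ∀ n : ℕ, q ^ n * ((q * (b * q ^ m) * q ^ n) ^ (α - 1) *
        QFrac.poch q (q * (b * q ^ m) / (q * (b * q ^ m) * q ^ n)) (α - 1) *
        f (q * (b * q ^ m) * q ^ n)) = 0 := by
      intro n
      rw [hzero2 n]; ring
    rw [tsum_congr hz, tsum_zero]
  have h1 : ∑' n : ℕ, q ^ n * ((b * q ^ n) ^ (α - 1) *
      QFrac.poch q (q * (b * q ^ m) / (b * q ^ n)) (α - 1) * f (b * q ^ n)) =
      ∑ j ∈ Finset.range (m + 1), q ^ j * ((b * q ^ j) ^ (α - 1) *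
      QFrac.poch q (q * (b * q ^ m) / (b * q ^ j)) (α - 1) * f (b * q ^ j)) := by
    refine tsum_eq_sum fun n hn => ?_
    rw [hzero n (by simp only [Finset.mem_range] at hn; omega)]
    ring
  rw [h1, h2, mul_zero, sub_zero, Finset.mul_sum, Finset.mul_sum, Finset.mul_sum]
  refine Finset.sum_congr rfl fun j hj => ?_
  have hjm : j ≤ m := by
    have := Finset.mem_range.mp hj; omega
  have harg : q * (b * q ^ m) / (b * q ^ j) = q ^ (m - j + 1) := by
    rw [div_eq_iff (by positivity)]
    have h3 : q ^ (m - j + 1) * (b * q ^ j) = b * q ^ (m - j + 1 + j) := by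
      rw [pow_add]; ring
    rw [h3, show m - j + 1 + j = m + 1 from by omega, pow_succ]
    ring
  rw [harg]
  have key := gamma_poch (q := q) hq hq1 hα (m - j)
  -- scalar rpow computations
  have hqj : (0:ℝ) < q ^ j := by positivity
  have e1 : ((b * q ^ j : ℝ)) ^ (α - 1) = b ^ (α - 1) * q ^ ((j : ℝ) * (α - 1)) := by
    rw [Real.mul_rpow hb.le hqj.le, ← Real.rpow_natCast q j, ← Real.rpow_mul hq.le]
  have e2 : (b : ℝ) * b ^ (α - 1) = b ^ α := by
    nth_rewrite 1 [← Real.rpow_one b]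
    rw [← Real.rpow_add hb]
    norm_num
  have e3 : (1 - q) * (1 - q) ^ (α - 1) = (1 - q) ^ α := by
    nth_rewrite 1 [← Real.rpow_one (1 - q)]
    rw [← Real.rpow_add hq1']
    norm_num
  have e4 : (q:ℝ) ^ j * q ^ ((j:ℝ) * (α - 1)) = q ^ ((j:ℝ) * α) := by
    rw [← Real.rpow_natCast q j, ← Real.rpow_add hq]
    congr 1; ring
  rw [e1, ← e2, ← e3, ← e4]
  linear_combination ((1 - q) * b * q ^ j * (b ^ (α - 1)) * (q ^ ((j:ℝ) * (α - 1))) *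
    f (b * q ^ j)) * key
end
end

section
/- For 0 < q < 1, b > 0, μ > -1 and α > 0, the right-sided Riemann–Liouville q-fractional integral of the function x ↦ b^μ (qx/b;q)_μ equals (Γ_q(μ+1)/Γ_q(μ+α+1)) b^{α+μ} (qx/b;q)_{μ+α} for x ∈ A_{q,b}. -/
set_option maxHeartbeats 1000000


open Filter

noncomputable section

section Hidden
namespace QAux
open QFrac Real

variable {q : ℝ}

lemma tprod_zero {f : ℕ → ℝ} (i0 : ℕ) (h : f i0 = 0) : ∏' n, f n = 0 := by
  have hp : HasProd f 0 := by
    have hev : ∀ᶠ s : Finset ℕ in atTop, ∏ i ∈ s, f i = 0 := by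
      filter_upwards [Filter.eventually_ge_atTop ({i0} : Finset ℕ)] with s hs
      exact Finset.prod_eq_zero (hs (Finset.mem_singleton_self i0)) h
    exact tendsto_const_nhds.congr' (hev.mono fun s h => h.symm)
  exact hp.tprod_eq

lemma summable_log (hq : 0 < q) (hq1 : q < 1) {w : ℝ} (hw0 : 0 ≤ w) (hw1 : w < 1) :
    Summable (fun n : ℕ => Real.log (1 - w * q ^ n)) := by
  have hqn : ∀ n : ℕ, 0 ≤ w * q ^ n ∧ w * q ^ n ≤ w := by
    intro n
    constructor
    · positivity
    · calc w * q ^ n ≤ w * 1 := by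
            apply mul_le_mul_of_nonneg_left _ hw0
            exact pow_le_one₀ hq.le hq1.le
        _ = w := mul_one w
  have hpos : ∀ n : ℕ, 0 < 1 - w * q ^ n := fun n => by
    have := (hqn n).2; linarith
  rw [← summable_neg_iff]
  refine Summable.of_nonneg_of_le (g := fun n : ℕ => -Real.log (1 - w * q ^ n))
      (f := fun n => (w / (1 - w)) * q ^ n) ?_ ?_
      ((summable_geometric_of_lt_one hq.le hq1).mul_left _)
  · intro n
    rw [neg_nonneg]
    apply Real.log_nonpos (by linarith [hpos n]) (by linarith [(hqn n).1])
  · intro n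
    show -Real.log (1 - w * q ^ n) ≤ w / (1 - w) * q ^ n
    have h1 : -Real.log (1 - w * q ^ n) = Real.log (1 - w * q ^ n)⁻¹ := (Real.log_inv _).symm
    rw [h1]
    have hne : (1 - w * q ^ n) ≠ 0 := ne_of_gt (hpos n)
    calc Real.log (1 - w * q ^ n)⁻¹ ≤ (1 - w * q ^ n)⁻¹ - 1 :=
          Real.log_le_sub_one_of_pos (inv_pos.2 (hpos n))
      _ = (w * q ^ n) / (1 - w * q ^ n) := by
          field_simp
          ring
      _ ≤ (w * q ^ n) / (1 - w) := by
          apply div_le_div_of_nonneg_left (hqn n).1 (by linarith) (by linarith [(hqn n).2])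
      _ = (w / (1 - w)) * q ^ n := by ring

lemma hasProd_pochInf (hq : 0 < q) (hq1 : q < 1) {w : ℝ} (hw0 : 0 ≤ w) (hw1 : w < 1) :
    HasProd (fun n : ℕ => 1 - w * q ^ n) (Real.exp (∑' n : ℕ, Real.log (1 - w * q ^ n))) := by
  have hpos : ∀ n : ℕ, 0 < 1 - w * q ^ n := by
    intro n
    have h1 : w * q ^ n ≤ w * 1 := mul_le_mul_of_nonneg_left (pow_le_one₀ hq.le hq1.le) hw0
    nlinarith
  have hs := (summable_log hq hq1 hw0 hw1).hasSum.rexp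
  have he : (Real.exp ∘ fun n : ℕ => Real.log (1 - w * q ^ n)) = fun n : ℕ => 1 - w * q ^ n :=
    funext fun n => Real.exp_log (hpos n)
  rwa [he] at hs

lemma multipliable_pochInf (hq : 0 < q) (hq1 : q < 1) {w : ℝ} (hw0 : 0 ≤ w) (hw1 : w < 1) :
    Multipliable (fun n : ℕ => 1 - w * q ^ n) :=
  ⟨_, hasProd_pochInf hq hq1 hw0 hw1⟩

lemma pochInf_pos (hq : 0 < q) (hq1 : q < 1) {w : ℝ} (hw0 : 0 ≤ w) (hw1 : w < 1) :
    0 < pochInf q w := by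
  rw [pochInf, (hasProd_pochInf hq hq1 hw0 hw1).tprod_eq]
  exact Real.exp_pos _

lemma pochN_pos (hq : 0 < q) (hq1 : q < 1) {w : ℝ} (hw0 : 0 ≤ w) (hw1 : w < 1) (k : ℕ) :
    0 < pochN q w k := by
  apply Finset.prod_pos
  intro i _
  have h1 : w * q ^ i ≤ w * 1 := mul_le_mul_of_nonneg_left (pow_le_one₀ hq.le hq1.le) hw0
  nlinarith

lemma peel1 (hq : 0 < q) (hq1 : q < 1) {w : ℝ} (hw0 : 0 ≤ w) (hw1 : w < 1) :
    pochInf q w = (1 - w) * pochInf q (w * q) := by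
  have hfun : (fun n : ℕ => 1 - w * q ^ (n + 1)) = fun n : ℕ => 1 - w * q * q ^ n := by
    funext n; rw [pow_succ]; ring
  have hm : Multipliable (fun n : ℕ => 1 - w * q ^ (n + 1)) := by
    rw [hfun]
    exact multipliable_pochInf hq hq1 (by positivity) (by nlinarith)
  have h := tprod_eq_zero_mul' (f := fun n : ℕ => 1 - w * q ^ n) hm
  show (∏' n : ℕ, (1 - w * q ^ n)) = (1 - w) * ∏' n : ℕ, (1 - w * q * q ^ n)
  rw [h]
  congr 1
  · simp
  · exact tprod_congr fun n => by simp only [pow_succ]; ring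

lemma peelN (hq : 0 < q) (hq1 : q < 1) {w : ℝ} (hw0 : 0 ≤ w) (hw1 : w < 1) (k : ℕ) :
    pochInf q w = pochN q w k * pochInf q (w * q ^ k) := by
  induction k with
  | zero => simp [pochN]
  | succ k ih =>
    have hwk0 : 0 ≤ w * q ^ k := by positivity
    have hwk1 : w * q ^ k < 1 := by
      have h1 : w * q ^ k ≤ w * 1 := mul_le_mul_of_nonneg_left (pow_le_one₀ hq.le hq1.le) hw0
      nlinarith
    have hs : pochN q w (k + 1) = pochN q w k * (1 - w * q ^ k) := Finset.prod_range_succ _ _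
    rw [ih, peel1 hq hq1 hwk0 hwk1, hs,
      show w * q ^ k * q = w * q ^ (k + 1) by rw [pow_succ]; ring]
    ring

lemma pochN_succ (q z : ℝ) (k : ℕ) : pochN q z (k + 1) = pochN q z k * (1 - z * q ^ k) :=
  Finset.prod_range_succ _ _

def gb (q : ℝ) : ℕ → ℕ → ℝ
  | 0, 0 => 1
  | 0, _ + 1 => 0
  | _ + 1, 0 => 1
  | n + 1, k + 1 => gb q n (k + 1) + q ^ (n - k) * gb q n k

lemma gb_zero (q : ℝ) : ∀ n k : ℕ, n < k → gb q n k = 0 := by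
  intro n
  induction n with
  | zero => intro k hk; match k, hk with
    | k + 1, _ => rfl
  | succ n ih =>
    intro k hk
    match k, hk with
    | k + 1, hk =>
      show gb q n (k + 1) + q ^ (n - k) * gb q n k = 0
      rw [ih (k + 1) (by omega), ih k (by omega)]
      ring

lemma gb_diag (q : ℝ) : ∀ n : ℕ, gb q n n = 1 := by
  intro n
  induction n with
  | zero => rfl
  | succ n ih =>
    show gb q n (n + 1) + q ^ (n - n) * gb q n n = 1
    rw [gb_zero q n (n + 1) (by omega), ih]
    simp

lemma gb_mul (q : ℝ) : ∀ n k : ℕ, k ≤ n →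
    gb q n k * (pochN q q k * pochN q q (n - k)) = pochN q q n := by
  intro n
  induction n with
  | zero =>
    intro k hk
    interval_cases k
    simp [gb, pochN]
  | succ n ih =>
    intro k hk
    match k with
    | 0 =>
      show gb q (n + 1) 0 * (pochN q q 0 * pochN q q (n + 1 - 0)) = pochN q q (n + 1)
      have : gb q (n + 1) 0 = 1 := rfl
      simp [this, pochN]
    | k' + 1 =>
      show (gb q n (k' + 1) + q ^ (n - k') * gb q n k') *
          (pochN q q (k' + 1) * pochN q q (n + 1 - (k' + 1))) = pochN q q (n + 1)
      have hsub : n + 1 - (k' + 1) = n - k' := by omega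
      rw [hsub]
      by_cases hc : k' + 1 ≤ n
      · have h1 := ih (k' + 1) hc
        have h2 := ih k' (by omega)
        have e1 : n - k' = (n - (k' + 1)) + 1 := by omega
        have e2 : pochN q q (n - k') = pochN q q (n - (k' + 1)) * (1 - q * q ^ (n - (k' + 1))) := by
          rw [e1, pochN_succ]
        have e3 : pochN q q (k' + 1) = pochN q q k' * (1 - q * q ^ k') := pochN_succ q q k'
        have e4 : pochN q q (n + 1) = pochN q q n * (1 - q * q ^ n) := pochN_succ q q n
        have p2 : q ^ (n - k') * (q * q ^ k') = q * q ^ n := by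
          rw [mul_left_comm, ← pow_add]
          congr 2
          omega
        have p3 : q ^ (n - k') = q * q ^ (n - (k' + 1)) := by
          rw [e1, pow_succ]
          ring
        rw [e2] at h2
        rw [e2, e4]
        rw [e3] at h1 ⊢
        linear_combination (1 - q * q ^ (n - (k' + 1))) * h1 +
          q ^ (n - k') * (1 - q * q ^ k') * h2 - pochN q q n * p2 + pochN q q n * p3
      · have hk2 : k' = n := by omega
        subst hk2
        rw [gb_zero q k' (k' + 1) (by omega), gb_diag, Nat.sub_self]
        norm_num [pochN]

lemma gb_base (q : ℝ) : ∀ n : ℕ, gb q n 0 = 1 := by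
  intro n; cases n <;> rfl

lemma vdm (q c d : ℝ) (n : ℕ) :
    ∑ k ∈ Finset.range (n + 1), c ^ k * pochN q d k * pochN q c (n - k) * gb q n k =
      pochN q (c * d) n := by
  induction n with
  | zero => simp [pochN, gb]
  | succ n ih =>
    have step1 : ∀ k, gb q (n + 1) k = gb q n k +
        (match k with | 0 => (0 : ℝ) | Nat.succ j => q ^ (n - j) * gb q n j) := by
      intro k
      match k with
      | 0 => simp [gb_base]
      | j + 1 => rfl
    calc ∑ k ∈ Finset.range (n + 1 + 1),
          c ^ k * pochN q d k * pochN q c (n + 1 - k) * gb q (n + 1) k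
        = ∑ k ∈ Finset.range (n + 2), (c ^ k * pochN q d k * pochN q c (n + 1 - k) * gb q n k
            + c ^ k * pochN q d k * pochN q c (n + 1 - k) *
              (match k with | 0 => (0 : ℝ) | Nat.succ j => q ^ (n - j) * gb q n j)) := by
          refine Finset.sum_congr rfl fun k _ => ?_
          rw [step1 k]; ring
      _ = (∑ k ∈ Finset.range (n + 2), c ^ k * pochN q d k * pochN q c (n + 1 - k) * gb q n k)
          + ∑ k ∈ Finset.range (n + 2), c ^ k * pochN q d k * pochN q c (n + 1 - k) *
              (match k with | 0 => (0 : ℝ) | Nat.succ j => q ^ (n - j) * gb q n j) :=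
          Finset.sum_add_distrib
      _ = ∑ k ∈ Finset.range (n + 1),
            (1 - c * d * q ^ n) * (c ^ k * pochN q d k * pochN q c (n - k) * gb q n k) := by
          rw [Finset.sum_range_succ
            (f := fun k => c ^ k * pochN q d k * pochN q c (n + 1 - k) * gb q n k)]
          rw [gb_zero q n (n + 1) (by omega)]
          rw [Finset.sum_range_succ'
            (f := fun k => c ^ k * pochN q d k * pochN q c (n + 1 - k) *
              (match k with | 0 => (0 : ℝ) | Nat.succ j => q ^ (n - j) * gb q n j))]
          simp only [mul_zero, add_zero, zero_add, Nat.succ_sub_succ]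
          rw [← Finset.sum_add_distrib]
          refine Finset.sum_congr rfl fun k hk => ?_
          have hk' : k ≤ n := by
            simpa [Nat.lt_succ_iff] using hk
          have e1 : n + 1 - k = (n - k) + 1 := by omega
          rw [e1, pochN_succ q c (n - k), pochN_succ q d k]
          have hpow : q ^ (n - k) * q ^ k = q ^ n := by
            rw [← pow_add]; congr 1; omega
          linear_combination (-1 * c ^ (k + 1) * d * pochN q d k * pochN q c (n - k) * gb q n k) * hpow
      _ = (1 - c * d * q ^ n) * pochN q (c * d) n := by rw [← Finset.mul_sum, ih]
      _ = pochN q (c * d) (n + 1) := by rw [pochN_succ]; ring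

lemma vdm_div {q : ℝ} (hq : 0 < q) (hq1 : q < 1) (c d : ℝ) (n : ℕ) :
    ∑ k ∈ Finset.range (n + 1), c ^ k * pochN q d k * pochN q c (n - k) /
        (pochN q q k * pochN q q (n - k)) = pochN q (c * d) n / pochN q q n := by
  have hP : ∀ j : ℕ, 0 < pochN q q j := fun j => pochN_pos hq hq1 hq.le hq1 j
  rw [eq_div_iff (ne_of_gt (hP n)), ← vdm q c d n, Finset.sum_mul]
  refine Finset.sum_congr rfl fun k hk => ?_
  have hk' : k ≤ n := by simpa [Nat.lt_succ_iff] using hk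
  have h := gb_mul q n k hk'
  have h1 : pochN q q k ≠ 0 := ne_of_gt (hP k)
  have h2 : pochN q q (n - k) ≠ 0 := ne_of_gt (hP (n - k))
  field_simp
  linear_combination (-(c ^ k * pochN q d k * pochN q c (n - k))) * h

lemma poch_nat {q : ℝ} (hq : 0 < q) (hq1 : q < 1) {ν : ℝ} (hν : 0 < ν + 1) (m : ℕ) :
    poch q ((q : ℝ) ^ (m + 1)) ν = pochN q (q * q ^ ν) m / pochN q q m * poch q q ν := by
  have hqv : (0 : ℝ) < q * q ^ ν := by positivity
  have hqv1 : q * q ^ ν < 1 := by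
    have : q * q ^ ν = q ^ (ν + 1) := by
      rw [Real.rpow_add hq, Real.rpow_one]; ring
    rw [this]
    exact Real.rpow_lt_one hq.le hq1 hν
  have hA := peelN hq hq1 hq.le hq1 m
  have hB := peelN hq hq1 hqv.le hqv1 m
  have hPq : 0 < pochN q q m := pochN_pos hq hq1 hq.le hq1 m
  have hPv : 0 < pochN q (q * q ^ ν) m := pochN_pos hq hq1 hqv.le hqv1 m
  have hIv : 0 < pochInf q (q * q ^ ν) := pochInf_pos hq hq1 hqv.le hqv1
  have hIvm : 0 < pochInf q (q * q ^ ν * q ^ m) := by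
    apply pochInf_pos hq hq1 (by positivity)
    calc q * q ^ ν * q ^ m ≤ q * q ^ ν * 1 := by
          apply mul_le_mul_of_nonneg_left (pow_le_one₀ hq.le hq1.le) hqv.le
      _ < 1 := by rw [mul_one]; exact hqv1
  have e1 : (q : ℝ) ^ (m + 1) = q * q ^ m := by rw [pow_succ]; ring
  have e2 : q * q ^ m * q ^ ν = q * q ^ ν * q ^ m := by ring
  simp only [poch]
  rw [e1, e2]
  have hA' : pochInf q (q * q ^ m) = pochInf q q / pochN q q m := by
    rw [hA]; field_simp
  rw [hA', hB]
  field_simp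

lemma scalar_id {q : ℝ} (hq : 0 < q) (hq1 : q < 1) {α μ : ℝ} (hα : 0 < α) (hμ : -1 < μ) :
    (qGamma q α)⁻¹ * (1 - q) * (poch q q (α - 1) * poch q q μ) =
      qGamma q (μ + 1) / qGamma q (μ + α + 1) * poch q q (μ + α) := by
  have h1q : (0 : ℝ) < 1 - q := by linarith
  have merge : ∀ t : ℝ, q * q ^ t = q ^ (t + 1) := by
    intro t
    rw [Real.rpow_add hq, Real.rpow_one]
    ring
  simp only [qGamma, poch, merge]
  rw [show α - 1 + 1 = α by ring]
  have hP1 : 0 < pochInf q q := pochInf_pos hq hq1 hq.le hq1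
  have hsmall : ∀ t : ℝ, 0 < t → q ^ t < 1 := fun t ht => Real.rpow_lt_one hq.le hq1 ht
  have hPa : 0 < pochInf q (q ^ α) :=
    pochInf_pos hq hq1 (Real.rpow_pos_of_pos hq α).le (hsmall α hα)
  have hPm : 0 < pochInf q (q ^ (μ + 1)) :=
    pochInf_pos hq hq1 (Real.rpow_pos_of_pos hq _).le (hsmall _ (by linarith))
  have hPma : 0 < pochInf q (q ^ (μ + α + 1)) :=
    pochInf_pos hq hq1 (Real.rpow_pos_of_pos hq _).le (hsmall _ (by linarith))
  have hE : ∀ t : ℝ, (0 : ℝ) < (1 - q) ^ t := fun t => Real.rpow_pos_of_pos h1q t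
  have key : (1 - q) * (1 - q) ^ (-α + -μ) = (1 - q) ^ (-μ) * (1 - q) ^ (1 - α) := by
    have k1 : (1 - q) ^ (1 + (-α + -μ)) = (1 - q) * (1 - q) ^ (-α + -μ) := by
      rw [Real.rpow_add h1q, Real.rpow_one]
    have k2 : (1 - q) ^ (-μ) * (1 - q) ^ (1 - α) =
        (1 - q) ^ (-μ + (1 - α)) := (Real.rpow_add h1q _ _).symm
    rw [← k1, k2]
    congr 1
    ring
  rw [show 1 - (μ + 1) = -μ by ring, show 1 - (μ + α + 1) = -α + -μ by ring]
  have hE1 : (1 - q) ^ (1 - α) = (1 - q) * (1 - q) ^ (-α + -μ) / (1 - q) ^ (-μ) := by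
    rw [key]; field_simp [(hE (-μ)).ne']
  rw [hE1]
  field_simp [(hE (-μ)).ne', (hE (-α + -μ)).ne', hP1.ne', hPa.ne', hPm.ne', hPma.ne', h1q.ne']

end QAux
end Hidden

/-- right-sided q-fractional integral of `b^μ (qx/b;q)_μ`. -/
theorem stmt1 (q b α μ : ℝ) (hq : 0 < q) (hq1 : q < 1) (hb : 0 < b)
    (hα : 0 < α) (hμ : -1 < μ) (n : ℕ) :
    QFrac.Iright q b α (fun t => b ^ μ * QFrac.poch q (q * t / b) μ) (b * q ^ n) =
      QFrac.qGamma q (μ + 1) / QFrac.qGamma q (μ + α + 1) * b ^ (α + μ) *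
        QFrac.poch q (q * (b * q ^ n) / b) (μ + α) := by
  simp only [QFrac.Iright, QFrac.jacksonI, QFrac.jackson]
  have hqne : q ≠ 0 := ne_of_gt hq
  have hbne : b ≠ 0 := ne_of_gt hb
  have h1q : (0 : ℝ) < 1 - q := by linarith
  have hα1 : (0 : ℝ) < (α - 1) + 1 := by linarith
  have hμ1 : (0 : ℝ) < μ + 1 := by linarith
  have hμα1 : (0 : ℝ) < (μ + α) + 1 := by linarith
  have pzero : ∀ (z : ℝ) (i : ℕ), z * q ^ i = 1 → QFrac.poch q z (α - 1) = 0 := by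
    intro z i hzi
    have h0 : QFrac.pochInf q z = 0 := by
      apply QAux.tprod_zero i
      show 1 - z * q ^ i = 0
      rw [hzi]
      ring
    simp [QFrac.poch, h0]
  have hz2 : ∀ k : ℕ, QFrac.poch q (q * (b * q ^ n) / (q * (b * q ^ n) * q ^ k)) (α - 1) = 0 := by
    intro k
    apply pzero _ k
    field_simp
  have hJ2 : ∑' (k : ℕ), q ^ k *
      ((q * (b * q ^ n) * q ^ k) ^ (α - 1) *
          QFrac.poch q (q * (b * q ^ n) / (q * (b * q ^ n) * q ^ k)) (α - 1) *
        (b ^ μ * QFrac.poch q (q * (q * (b * q ^ n) * q ^ k) / b) μ)) = 0 := by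
    rw [tsum_congr (g := fun _ : ℕ => (0 : ℝ)) fun k => by rw [hz2 k]; ring]
    exact tsum_zero
  have hz1 : ∀ j : ℕ, n < j → QFrac.poch q (q * (b * q ^ n) / (b * q ^ j)) (α - 1) = 0 := by
    intro j hj
    apply pzero _ (j - (n + 1))
    have hp : q * (b * q ^ n) * q ^ (j - (n + 1)) = b * q ^ j := by
      rw [show q * (b * q ^ n) = b * q ^ (n + 1) by rw [pow_succ]; ring, mul_assoc, ← pow_add]
      congr 2
      omega
    rw [div_mul_eq_mul_div, hp, div_self (by positivity)]
  have hterm : ∀ k : ℕ, k ≤ n → q ^ k *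
      ((b * q ^ k) ^ (α - 1) * QFrac.poch q (q * (b * q ^ n) / (b * q ^ k)) (α - 1) *
        (b ^ μ * QFrac.poch q (q * (b * q ^ k) / b) μ)) =
      (b ^ (α - 1) * b ^ μ * QFrac.poch q q (α - 1) * QFrac.poch q q μ) *
        ((q * q ^ (α - 1)) ^ k * QFrac.pochN q (q * q ^ μ) k *
            QFrac.pochN q (q * q ^ (α - 1)) (n - k) /
          (QFrac.pochN q q k * QFrac.pochN q q (n - k))) := by
    intro k hk
    have harg1 : q * (b * q ^ n) / (b * q ^ k) = q ^ (n - k + 1) := by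
      rw [div_eq_iff (by positivity)]
      have hpow : q ^ (n - k + 1) * q ^ k = q * q ^ n := by
        rw [← pow_add, show n - k + 1 + k = n + 1 by omega, pow_succ]
        ring
      linear_combination (-b) * hpow
    have harg2 : q * (b * q ^ k) / b = q ^ (k + 1) := by
      rw [div_eq_iff hbne, pow_succ]
      ring
    rw [harg1, harg2, QAux.poch_nat hq hq1 hα1 (n - k), QAux.poch_nat hq hq1 hμ1 k]
    have hbq : (b * q ^ k) ^ (α - 1) = b ^ (α - 1) * q ^ ((α - 1) * (k : ℝ)) := by
      rw [Real.mul_rpow hb.le (by positivity)]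
      congr 1
      rw [← Real.rpow_natCast q k, ← Real.rpow_mul hq.le]
      congr 1
      ring
    have hck : (q * q ^ (α - 1)) ^ k = q ^ k * q ^ ((α - 1) * (k : ℝ)) := by
      rw [mul_pow]
      congr 1
      rw [← Real.rpow_natCast (q ^ (α - 1)) k, ← Real.rpow_mul hq.le]
    rw [hbq, hck]
    ring
  have hsupp : ∀ k : ℕ, k ∉ Finset.range (n + 1) → q ^ k *
      ((b * q ^ k) ^ (α - 1) * QFrac.poch q (q * (b * q ^ n) / (b * q ^ k)) (α - 1) *
        (b ^ μ * QFrac.poch q (q * (b * q ^ k) / b) μ)) = 0 := by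
    intro k hkk
    have hnk : n < k := by
      simp only [Finset.mem_range, not_lt] at hkk
      omega
    rw [hz1 k hnk]
    ring
  have hJ1 : ∑' (k : ℕ), q ^ k *
      ((b * q ^ k) ^ (α - 1) * QFrac.poch q (q * (b * q ^ n) / (b * q ^ k)) (α - 1) *
        (b ^ μ * QFrac.poch q (q * (b * q ^ k) / b) μ)) =
      (b ^ (α - 1) * b ^ μ * QFrac.poch q q (α - 1) * QFrac.poch q q μ) *
        (QFrac.pochN q (q * q ^ (α - 1) * (q * q ^ μ)) n / QFrac.pochN q q n) := by
    rw [tsum_eq_sum hsupp]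
    rw [Finset.sum_congr rfl fun k hk =>
      hterm k (by simpa [Nat.lt_succ_iff] using hk)]
    rw [← Finset.mul_sum, QAux.vdm_div hq hq1 _ _ n]
  have hcd : q * q ^ (α - 1) * (q * q ^ μ) = q * q ^ (μ + α) := by
    have e1 : q ^ (α - 1) * q ^ μ = q ^ (α - 1 + μ) := (Real.rpow_add hq _ _).symm
    have e2 : q ^ (μ + α) = q * q ^ (α - 1 + μ) := by
      rw [show μ + α = 1 + (α - 1 + μ) by ring, Real.rpow_add hq, Real.rpow_one]
    rw [e2, ← e1]
    ring
  have hxarg : q * (b * q ^ n) / b = q ^ (n + 1) := by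
    rw [div_eq_iff hbne, pow_succ]
    ring
  rw [hJ1, hJ2, mul_zero, sub_zero, hxarg, QAux.poch_nat hq hq1 hμα1 n, hcd]
  have hbpow : b ^ (α + μ) = b * b ^ (α - 1) * b ^ μ := by
    rw [show α + μ = 1 + (α - 1) + μ by ring, Real.rpow_add hb, Real.rpow_add hb, Real.rpow_one]
  have hscal := QAux.scalar_id hq hq1 hα hμ
  rw [hbpow]
  linear_combination (QFrac.pochN q (q * q ^ (μ + α)) n / QFrac.pochN q q n) *
    (b * b ^ (α - 1) * b ^ μ) * hscal
end
end

section
/- The right-sided Riemann–Liouville q-fractional integral operator satisfies the semigroup property: I^α_{q,b^-} I^β_{q,b^-} f(x) = I^{α+β}_{q,b^-} f(x) for all x ∈ A*_{q,b}, for any function f defined on A_{q,b} and any α, β > 0. -/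
open Filter

noncomputable section

namespace Stmt2Aux
open QFrac Finset Real Topology

variable {q : ℝ}

lemma summable_log (hq : 0 < q) (hq1 : q < 1) {z : ℝ} (h0 : 0 ≤ z) (h1 : z < 1) :
    Summable fun n : ℕ => Real.log (1 - z * q ^ n) := by
  have hfac : ∀ n : ℕ, 0 ≤ z * q ^ n ∧ z * q ^ n ≤ z := fun n =>
    ⟨mul_nonneg h0 (pow_nonneg hq.le n),
     mul_le_of_le_one_right h0 (pow_le_one₀ hq.le hq1.le)⟩
  apply Summable.of_norm_bounded (g := fun n => z / (1 - z) * q ^ n)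
    ((summable_geometric_of_lt_one hq.le hq1).mul_left _)
  intro n
  obtain ⟨ha, hb⟩ := hfac n
  have h3 : 0 < 1 - z * q ^ n := by linarith
  rw [Real.norm_eq_abs, abs_of_nonpos (Real.log_nonpos (by linarith) (by linarith))]
  have h4 := Real.log_le_sub_one_of_pos (inv_pos.2 h3)
  rw [Real.log_inv] at h4
  have h5 : (1 - z * q ^ n)⁻¹ - 1 = (z * q ^ n) / (1 - z * q ^ n) := by field_simp; ring
  rw [h5] at h4
  have h6 : (z * q ^ n) / (1 - z * q ^ n) ≤ (z * q ^ n) / (1 - z) := by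
    gcongr <;> linarith
  calc -Real.log (1 - z * q ^ n) ≤ (z * q ^ n) / (1 - z * q ^ n) := by linarith
    _ ≤ (z * q ^ n) / (1 - z) := h6
    _ = z / (1 - z) * q ^ n := by ring

lemma hasProd_pochInf (hq : 0 < q) (hq1 : q < 1) {z : ℝ} (h0 : 0 ≤ z) (h1 : z < 1) :
    HasProd (fun n : ℕ => 1 - z * q ^ n)
      (Real.exp (∑' n : ℕ, Real.log (1 - z * q ^ n))) := by
  have hs := (summable_log hq hq1 h0 h1).hasSum
  have hpos : ∀ n : ℕ, (0:ℝ) < 1 - z * q ^ n := by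
    intro n
    have : z * q ^ n ≤ z := mul_le_of_le_one_right h0 (pow_le_one₀ hq.le hq1.le)
    linarith
  have hfn : ∀ n : ℕ, rexp (Real.log (1 - z * q ^ n)) = 1 - z * q ^ n :=
    fun n => Real.exp_log (hpos n)
  simpa [Function.comp_def, hfn] using hs.rexp

lemma pochInf_eq_exp (hq : 0 < q) (hq1 : q < 1) {z : ℝ} (h0 : 0 ≤ z) (h1 : z < 1) :
    pochInf q z = Real.exp (∑' n : ℕ, Real.log (1 - z * q ^ n)) :=
  (hasProd_pochInf hq hq1 h0 h1).tprod_eq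

lemma pochInf_pos (hq : 0 < q) (hq1 : q < 1) {z : ℝ} (h0 : 0 ≤ z) (h1 : z < 1) :
    0 < pochInf q z := by
  rw [pochInf_eq_exp hq hq1 h0 h1]; exact Real.exp_pos _

lemma pochInf_le_one (hq : 0 < q) (hq1 : q < 1) {z : ℝ} (h0 : 0 ≤ z) (h1 : z < 1) :
    pochInf q z ≤ 1 := by
  rw [pochInf_eq_exp hq hq1 h0 h1]
  rw [Real.exp_le_one_iff]
  apply tsum_nonpos
  intro n
  have h2 : z * q ^ n ≤ z := mul_le_of_le_one_right h0 (pow_le_one₀ hq.le hq1.le)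
  have h3 : 0 ≤ z * q ^ n := mul_nonneg h0 (pow_nonneg hq.le n)
  exact Real.log_nonpos (by linarith) (by linarith)

lemma pochInf_shift (hq : 0 < q) (hq1 : q < 1) {z : ℝ} (h0 : 0 ≤ z) (h1 : z < 1) (k : ℕ) :
    pochInf q z = pochN q z k * pochInf q (z * q ^ k) := by
  have hzk0 : 0 ≤ z * q ^ k := mul_nonneg h0 (pow_nonneg hq.le k)
  have hzk1 : z * q ^ k < 1 :=
    lt_of_le_of_lt (mul_le_of_le_one_right h0 (pow_le_one₀ hq.le hq1.le)) h1
  rw [pochInf_eq_exp hq hq1 h0 h1, pochInf_eq_exp hq hq1 hzk0 hzk1]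
  rw [← Summable.sum_add_tsum_nat_add k (summable_log hq hq1 h0 h1)]
  rw [Real.exp_add, Real.exp_sum]
  have hpos : ∀ n : ℕ, (0:ℝ) < 1 - z * q ^ n := by
    intro n
    have : z * q ^ n ≤ z := mul_le_of_le_one_right h0 (pow_le_one₀ hq.le hq1.le)
    linarith
  congr 1
  · rw [pochN]
    exact Finset.prod_congr rfl fun i _ => Real.exp_log (hpos i)
  · congr 1
    apply tsum_congr
    intro i
    congr 2
    rw [pow_add]
    ring

lemma pochN_pos (hq : 0 < q) (hq1 : q < 1) {z : ℝ} (h0 : 0 ≤ z) (h1 : z < 1) (k : ℕ) :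
    0 < pochN q z k := by
  rw [pochN]
  apply Finset.prod_pos
  intro i _
  have : z * q ^ i ≤ z := mul_le_of_le_one_right h0 (pow_le_one₀ hq.le hq1.le)
  linarith

lemma pochN_le_one (hq : 0 < q) (hq1 : q < 1) {z : ℝ} (h0 : 0 ≤ z) (h1 : z < 1) (k : ℕ) :
    pochN q z k ≤ 1 := by
  rw [pochN]
  apply Finset.prod_le_one
  · intro i _
    have : z * q ^ i ≤ z := mul_le_of_le_one_right h0 (pow_le_one₀ hq.le hq1.le)
    linarith
  · intro i _
    have : 0 ≤ z * q ^ i := mul_nonneg h0 (pow_nonneg hq.le i)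
    linarith

lemma pochN_q_ge (hq : 0 < q) (hq1 : q < 1) (k : ℕ) :
    pochInf q q ≤ pochN q q k := by
  have h := pochInf_shift hq hq1 hq.le hq1 k
  have h1 : pochInf q (q * q ^ k) ≤ 1 :=
    pochInf_le_one hq hq1 (by positivity)
      (lt_of_le_of_lt (mul_le_of_le_one_right hq.le (pow_le_one₀ hq.le hq1.le)) hq1)
  have h2 : 0 < pochN q q k := pochN_pos hq hq1 hq.le hq1 k
  nlinarith

/-- finite q-Pochhammer quotient -/
def sfun (q z : ℝ) (k : ℕ) : ℝ := pochN q z k / pochN q q k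

lemma sfun_rec (hq : 0 < q) (hq1 : q < 1) (z : ℝ) (k : ℕ) :
    (1 - q ^ (k+1)) * sfun q z (k+1) = (1 - z * q ^ k) * sfun q z k := by
  have h1 : pochN q q k ≠ 0 := (pochN_pos hq hq1 hq.le hq1 k).ne'
  have h2 : (1 : ℝ) - q * q ^ k ≠ 0 := by
    have : q * q ^ k ≤ q := mul_le_of_le_one_right hq.le (pow_le_one₀ hq.le hq1.le)
    intro h; nlinarith
  rw [sfun, sfun, pochN, pochN, Finset.prod_range_succ, Finset.prod_range_succ]
  rw [show (1:ℝ) - q ^ (k+1) = 1 - q * q ^ k by rw [pow_succ]; ring]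
  rw [← pochN, ← pochN]
  field_simp

lemma star (hq : 0 < q) (hq1 : q < 1) (a c : ℝ) : ∀ n : ℕ,
    (∑ j ∈ range (n+1), sfun q a (n-j) * sfun q c j * a ^ j) = sfun q (a*c) n := by
  intro n
  induction n with
  | zero => simp [sfun, pochN]
  | succ n ih =>
    have hq1n : (0:ℝ) < 1 - q ^ (n+1) := by
      have := pow_lt_one₀ hq.le hq1 (n := n+1) (by omega)
      linarith
    have key : (1 - q^(n+1)) * (∑ j ∈ range (n+1+1), sfun q a (n+1-j) * sfun q c j * a^j)
        = (1 - a*c*q^n) * ∑ j ∈ range (n+1), sfun q a (n-j) * sfun q c j * a^j := by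
      rw [Finset.mul_sum]
      have hdec : ∀ j ∈ range (n+2),
          (1 - q^(n+1)) * (sfun q a (n+1-j) * sfun q c j * a^j)
          = ((1-q^(n+1-j)) * sfun q a (n+1-j)) * (sfun q c j * a^j)
            + (q^(n+1-j) * sfun q a (n+1-j)) * (((1-q^j) * sfun q c j) * a^j) := by
        intro j hj
        have hj' : j ≤ n+1 := by
          have := mem_range.1 hj; omega
        have hpow : q^(n+1-j) * q^j = q^(n+1) := by
          rw [← pow_add, Nat.sub_add_cancel hj']
        linear_combination (sfun q a (n+1-j) * sfun q c j * a ^ j) * hpow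
      rw [Finset.sum_congr rfl hdec, Finset.sum_add_distrib]
      have e1 : ∑ j ∈ range (n+2),
          ((1-q^(n+1-j)) * sfun q a (n+1-j)) * (sfun q c j * a^j)
          = ∑ j ∈ range (n+1), ((1 - a*q^(n-j)) * sfun q a (n-j)) * (sfun q c j * a^j) := by
        rw [Finset.sum_range_succ]
        simp only [Nat.sub_self, pow_zero, sub_self, zero_mul, add_zero]
        apply Finset.sum_congr rfl
        intro j hj
        have hj' : j ≤ n := by have := mem_range.1 hj; omega
        have h1 : n + 1 - j = (n - j) + 1 := by omega
        rw [h1, sfun_rec hq hq1 a (n-j)]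
      have e2 : ∑ j ∈ range (n+2),
          (q^(n+1-j) * sfun q a (n+1-j)) * (((1-q^j) * sfun q c j) * a^j)
          = ∑ j ∈ range (n+1),
            (q^(n-j) * sfun q a (n-j)) * (((1 - c*q^j) * sfun q c j) * a^(j+1)) := by
        rw [Finset.sum_range_succ']
        simp only [pow_zero, sub_self, zero_mul, mul_zero, add_zero]
        apply Finset.sum_congr rfl
        intro j hj
        have h1 : n + 1 - (j+1) = n - j := by omega
        rw [h1, sfun_rec hq hq1 c j]
      rw [e1, e2, ← Finset.sum_add_distrib, Finset.mul_sum]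
      apply Finset.sum_congr rfl
      intro j hj
      have hj' : j ≤ n := by have := mem_range.1 hj; omega
      have hpow : q^(n-j) * q^j = q^n := by
        rw [← pow_add, Nat.sub_add_cancel hj']
      linear_combination (-(sfun q a (n-j) * sfun q c j * a ^ j * a * c)) * hpow
    rw [ih] at key
    have h2 := sfun_rec hq hq1 (a*c) n
    exact mul_left_cancel₀ (by linarith : (1:ℝ) - q^(n+1) ≠ 0) (key.trans h2.symm)

lemma hasProd_zero_of_eq_zero {f : ℕ → ℝ} {j : ℕ} (h : f j = 0) : HasProd f 0 := by
  have hev : ∀ᶠ s : Finset ℕ in atTop, ∏ i ∈ s, f i = 0 := by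
    filter_upwards [Filter.eventually_ge_atTop ({j} : Finset ℕ)] with s hs
    exact Finset.prod_eq_zero (hs (Finset.mem_singleton_self j)) h
  exact Tendsto.congr' (by filter_upwards [hev] with s hs using hs.symm) tendsto_const_nhds

lemma pochInf_zero_val {z : ℝ} (j : ℕ) (h : z * q ^ j = 1) : pochInf q z = 0 :=
  (hasProd_zero_of_eq_zero (f := fun n => 1 - z * q ^ n) (j := j)
    (by simp only [h]; ring)).tprod_eq

lemma poch_vanish {b : ℝ} (hq : 0 < q) (hb : 0 < b) (m k : ℕ) (hk : m < k) (ν : ℝ) :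
    poch q (q * (b * q ^ m) / (b * q ^ k)) ν = 0 := by
  rw [poch, pochInf_zero_val (j := k - m - 1) ?_, zero_div]
  have hbk : b * q ^ k ≠ 0 := by positivity
  field_simp
  rw [show q * q ^ m * q ^ (k - m - 1) = q ^ (m + 1) * q ^ (k - m - 1) by
    rw [pow_succ]; ring, ← pow_add, show m + 1 + (k - m - 1) = k by omega]

lemma Iright_grid {b : ℝ} (hq : 0 < q) (hq1 : q < 1) (hb : 0 < b) (γ : ℝ) (g : ℝ → ℝ)
    (m : ℕ) :
    Iright q b γ g (b * q ^ m) = (qGamma q γ)⁻¹ * ((1 - q) * b *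
      ∑ n ∈ range (m + 1), q ^ n *
        ((b * q ^ n) ^ (γ - 1) * poch q (q * (b * q ^ m) / (b * q ^ n)) (γ - 1) *
          g (b * q ^ n))) := by
  rw [Iright, jacksonI, jackson, jackson]
  have h2 : ∀ n : ℕ, q ^ n * ((q * (b * q ^ m) * q ^ n) ^ (γ - 1) *
      poch q (q * (b * q ^ m) / (q * (b * q ^ m) * q ^ n)) (γ - 1) *
        g (q * (b * q ^ m) * q ^ n)) = 0 := by
    intro n
    have harg : q * (b * q ^ m) * q ^ n = b * q ^ (m + 1 + n) := by
      rw [pow_add, pow_add, pow_one]; ring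
    rw [harg, poch_vanish hq hb m (m + 1 + n) (by omega)]
    ring
  have h2' : (∑' n : ℕ, q ^ n * ((q * (b * q ^ m) * q ^ n) ^ (γ - 1) *
      poch q (q * (b * q ^ m) / (q * (b * q ^ m) * q ^ n)) (γ - 1) *
        g (q * (b * q ^ m) * q ^ n))) = 0 := by
    rw [tsum_congr h2]; exact tsum_zero
  have h1 : (∑' n : ℕ, q ^ n * ((b * q ^ n) ^ (γ - 1) *
      poch q (q * (b * q ^ m) / (b * q ^ n)) (γ - 1) * g (b * q ^ n)))
      = ∑ n ∈ range (m + 1), q ^ n * ((b * q ^ n) ^ (γ - 1) *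
        poch q (q * (b * q ^ m) / (b * q ^ n)) (γ - 1) * g (b * q ^ n)) := by
    apply tsum_eq_sum
    intro n hn
    have hmn : m < n := by simpa using hn
    rw [poch_vanish hq hb m n hmn]
    ring
  rw [h1, h2']
  ring

lemma poch_grid {b : ℝ} (hq : 0 < q) (hb : 0 < b) (m n : ℕ) (h : n ≤ m) (ν : ℝ) :
    poch q (q * (b * q ^ m) / (b * q ^ n)) ν = poch q (q ^ (m + 1 - n)) ν := by
  congr 1
  have hbn : b * q ^ n ≠ 0 := by positivity
  field_simp
  rw [show q * q ^ m = q ^ (m + 1) by rw [pow_succ]; ring,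
    ← pow_add, show n + (m + 1 - n) = m + 1 by omega]

lemma qpow_lt_one (hq : 0 < q) (hq1 : q < 1) {γ : ℝ} (hγ : 0 < γ) : q ^ γ < 1 :=
  Real.rpow_lt_one hq.le hq1 hγ

lemma poch_eq_sfun (hq : 0 < q) (hq1 : q < 1) {γ : ℝ} (hγ : 0 < γ) (k : ℕ) :
    poch q (q ^ (k + 1)) (γ - 1)
      = sfun q (q ^ γ) k * (pochInf q q / pochInf q (q ^ γ)) := by
  have hγ0 : (0:ℝ) ≤ q ^ γ := (Real.rpow_pos_of_pos hq γ).le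
  have hγ1 : q ^ γ < 1 := qpow_lt_one hq hq1 hγ
  have hA := pochInf_shift hq hq1 hq.le hq1 k
  have hB := pochInf_shift hq hq1 hγ0 hγ1 k
  have hC : (q : ℝ) ^ (k + 1) * q ^ (γ - 1) = q ^ γ * q ^ k := by
    rw [← Real.rpow_natCast q (k + 1), ← Real.rpow_natCast q k,
      ← Real.rpow_add hq, ← Real.rpow_add hq]
    congr 1
    push_cast
    ring
  have hq1k : q * q ^ k = q ^ (k + 1) := by rw [pow_succ]; ring
  rw [poch, hC, sfun]
  rw [hq1k] at hA
  have hnz1 : pochN q q k ≠ 0 := (pochN_pos hq hq1 hq.le hq1 k).ne'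
  have hnz2 : pochN q (q ^ γ) k ≠ 0 := (pochN_pos hq hq1 hγ0 hγ1 k).ne'
  have hnz3 : pochInf q (q ^ γ * q ^ k) ≠ 0 := by
    have h1 : 0 ≤ q ^ γ * q ^ k := by positivity
    have h2 : q ^ γ * q ^ k < 1 :=
      lt_of_le_of_lt (mul_le_of_le_one_right hγ0 (pow_le_one₀ hq.le hq1.le)) hγ1
    exact (pochInf_pos hq hq1 h1 h2).ne'
  rw [hA, hB]
  field_simp

lemma qGamma_pos (hq : 0 < q) (hq1 : q < 1) {γ : ℝ} (hγ : 0 < γ) : 0 < qGamma q γ := by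
  rw [qGamma]
  have h1 : 0 < pochInf q q := pochInf_pos hq hq1 hq.le hq1
  have h2 : 0 < pochInf q (q ^ γ) :=
    pochInf_pos hq hq1 (Real.rpow_pos_of_pos hq γ).le (qpow_lt_one hq hq1 hγ)
  have h3 : (0:ℝ) < 1 - q := by linarith
  positivity

lemma tri_swap (F : ℕ → ℕ → ℝ) (m : ℕ) :
    ∑ n ∈ range (m+1), ∑ j ∈ range (n+1), F n j
      = ∑ j ∈ range (m+1), ∑ k ∈ range (m-j+1), F (j+k) j := by
  simp only [Finset.range_eq_Ico]
  rw [← Finset.sum_Ico_Ico_comm 0 (m+1) (fun x y => F y x)]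
  apply Finset.sum_congr rfl
  intro i hi
  have him : i ≤ m := by have := (Finset.mem_Ico.1 hi).2; omega
  rw [Finset.sum_Ico_eq_sum_range, show m + 1 - i = m - i + 1 by omega,
    Finset.range_eq_Ico]

lemma qpow_split (hq : 0 < q) (γ : ℝ) (k : ℕ) :
    ((q : ℝ) ^ γ) ^ k = q ^ k * ((q : ℝ) ^ k) ^ (γ - 1) := by
  rw [← Real.rpow_natCast (q ^ γ) k, ← Real.rpow_mul hq.le,
    ← Real.rpow_natCast q k, ← Real.rpow_mul hq.le, ← Real.rpow_add hq]
  congr 1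
  push_cast
  ring

lemma const_eq {b α β : ℝ} (hq : 0 < q) (hq1 : q < 1) (hb : 0 < b)
    (hα : 0 < α) (hβ : 0 < β) (j : ℕ) :
    (qGamma q α)⁻¹ * ((1-q)*b) * ((qGamma q β)⁻¹ * ((1-q)*b) *
      (q^j * (b*q^j)^(α-1) * (pochInf q q / pochInf q (q^α)) * q^j * (b*q^j)^(β-1) *
        (pochInf q q / pochInf q (q^β))))
    = (qGamma q (α+β))⁻¹ * ((1-q)*b) *
      (q^j * (b*q^j)^(α+β-1) * (pochInf q q / pochInf q (q^(α+β)))) := by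
  have hbq : (0:ℝ) < b * q ^ j := by positivity
  have h1q : (0:ℝ) < 1 - q := by linarith
  have e1 : ((b*q^j):ℝ)^(α+β-1) = (b*q^j)^(α-1) * (b*q^j)^(β-1) * (b*q^j)^(1:ℝ) := by
    rw [show α+β-1 = (α-1)+(β-1)+(1:ℝ) by ring, Real.rpow_add hbq, Real.rpow_add hbq]
  have e2 : ((1-q):ℝ)^(1-(α+β)) = (1-q)^(1-α) * (1-q)^(1-β) * ((1-q)^(-1:ℝ)) := by
    rw [show 1-(α+β) = (1-α)+(1-β)+(-1:ℝ) by ring, Real.rpow_add h1q, Real.rpow_add h1q]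
  have hPq : pochInf q q ≠ 0 := (pochInf_pos hq hq1 hq.le hq1).ne'
  have hPa : pochInf q (q^α) ≠ 0 :=
    (pochInf_pos hq hq1 (Real.rpow_pos_of_pos hq α).le (qpow_lt_one hq hq1 hα)).ne'
  have hPb : pochInf q (q^β) ≠ 0 :=
    (pochInf_pos hq hq1 (Real.rpow_pos_of_pos hq β).le (qpow_lt_one hq hq1 hβ)).ne'
  have hPab : pochInf q (q^(α+β)) ≠ 0 :=
    (pochInf_pos hq hq1 (Real.rpow_pos_of_pos hq (α+β)).le
      (qpow_lt_one hq hq1 (by linarith))).ne'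
  have hw1 : ((1-q):ℝ)^(1-α) ≠ 0 := (Real.rpow_pos_of_pos h1q _).ne'
  have hw2 : ((1-q):ℝ)^(1-β) ≠ 0 := (Real.rpow_pos_of_pos h1q _).ne'
  have hqj : (q:ℝ)^j ≠ 0 := by positivity
  rw [qGamma, qGamma, qGamma, e1, e2, Real.rpow_neg_one, Real.rpow_one]
  field_simp

lemma grid_case {b α β : ℝ} (hq : 0 < q) (hq1 : q < 1) (hb : 0 < b)
    (hα : 0 < α) (hβ : 0 < β) (f : ℝ → ℝ) (m : ℕ) :
    Iright q b α (Iright q b β f) (b * q ^ m) = Iright q b (α + β) f (b * q ^ m) := by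
  rw [Iright_grid hq hq1 hb α _ m, Iright_grid hq hq1 hb (α+β) f m]
  have hR : ∀ j ∈ range (m+1),
      q^j * ((b*q^j)^(α+β-1) * poch q (q*(b*q^m)/(b*q^j)) (α+β-1) * f (b*q^j))
      = q^j * ((b*q^j)^(α+β-1) *
          (sfun q (q^(α+β)) (m-j) * (pochInf q q / pochInf q (q^(α+β)))) * f (b*q^j)) := by
    intro j hj
    have hjm : j ≤ m := by have := mem_range.1 hj; omega
    rw [poch_grid hq hb m j hjm, show m+1-j = (m-j)+1 by omega,
      poch_eq_sfun hq hq1 (by linarith : (0:ℝ) < α+β) (m-j)]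
  rw [Finset.sum_congr rfl hR]
  have hL : ∀ n ∈ range (m+1),
      q^n * ((b*q^n)^(α-1) * poch q (q*(b*q^m)/(b*q^n)) (α-1) * Iright q b β f (b*q^n))
      = ∑ j ∈ range (n+1), (qGamma q β)⁻¹ * ((1-q)*b) *
          (q^n * (b*q^n)^(α-1) * (sfun q (q^α) (m-n) * (pochInf q q / pochInf q (q^α))) *
           (q^j * (b*q^j)^(β-1) * (sfun q (q^β) (n-j) * (pochInf q q / pochInf q (q^β))) *
             f (b*q^j))) := by
    intro n hn
    have hnm : n ≤ m := by have := mem_range.1 hn; omega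
    rw [poch_grid hq hb m n hnm, show m+1-n = (m-n)+1 by omega,
      poch_eq_sfun hq hq1 hα (m-n), Iright_grid hq hq1 hb β f n]
    have hinner : ∀ j ∈ range (n+1),
        q^j * ((b*q^j)^(β-1) * poch q (q*(b*q^n)/(b*q^j)) (β-1) * f (b*q^j))
        = q^j * ((b*q^j)^(β-1) *
            (sfun q (q^β) (n-j) * (pochInf q q / pochInf q (q^β))) * f (b*q^j)) := by
      intro j hj
      have hjn : j ≤ n := by have := mem_range.1 hj; omega
      rw [poch_grid hq hb n j hjn, show n+1-j = (n-j)+1 by omega,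
        poch_eq_sfun hq hq1 hβ (n-j)]
    rw [Finset.sum_congr rfl hinner]
    simp only [Finset.mul_sum]
    apply Finset.sum_congr rfl
    intro j hj
    ring
  rw [Finset.sum_congr rfl hL]
  rw [tri_swap]
  simp only [Finset.mul_sum]
  apply Finset.sum_congr rfl
  intro j hj
  have hjm : j ≤ m := by have := mem_range.1 hj; omega
  have hterm : ∀ k ∈ range (m-j+1),
      (qGamma q α)⁻¹ * ((1-q)*b*((qGamma q β)⁻¹ * ((1-q)*b) *
        (q^(j+k) * (b*q^(j+k))^(α-1) *
          (sfun q (q^α) (m-(j+k)) * (pochInf q q / pochInf q (q^α))) *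
         (q^j * (b*q^j)^(β-1) *
          (sfun q (q^β) ((j+k)-j) * (pochInf q q / pochInf q (q^β))) * f (b*q^j)))))
      = ((qGamma q α)⁻¹ * ((1-q)*b) * ((qGamma q β)⁻¹ * ((1-q)*b) *
          (q^j * (b*q^j)^(α-1) * (pochInf q q / pochInf q (q^α)) * q^j * (b*q^j)^(β-1) *
            (pochInf q q / pochInf q (q^β)))) * f (b*q^j)) *
        (sfun q (q^α) ((m-j)-k) * sfun q (q^β) k * ((q:ℝ)^α)^k) := by
    intro k hk
    have hkM : k ≤ m - j := by have := mem_range.1 hk; omega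
    have h1 : m - (j+k) = (m-j) - k := by omega
    have h2 : (j+k) - j = k := by omega
    rw [h1, h2, qpow_split hq α k, pow_add q j k,
      show b*((q:ℝ)^j*q^k) = (b*q^j)*q^k by ring,
      Real.mul_rpow (by positivity) (by positivity)]
    ring
  rw [Finset.sum_congr rfl hterm, ← Finset.mul_sum, star hq hq1 (q^α) (q^β) (m-j),
    ← Real.rpow_add hq]
  linear_combination (sfun q (q^(α+β)) (m-j) * f (b*q^j)) *
    const_eq hq hq1 hb hα hβ j

lemma pochInf_zero : pochInf q 0 = 1 := by
  rw [pochInf]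
  simp

lemma poch_zero (ν : ℝ) : poch q 0 ν = 1 := by
  rw [poch, zero_mul, pochInf_zero]
  norm_num

lemma Iright_zero {b : ℝ} (hq : 0 < q) (hq1 : q < 1) (hb : 0 < b) (γ : ℝ) (g : ℝ → ℝ) :
    Iright q b γ g 0 = (qGamma q γ)⁻¹ *
      ((1 - q) * b * ∑' n : ℕ, q ^ n * ((b * q ^ n) ^ (γ - 1) * g (b * q ^ n))) := by
  rw [Iright, jacksonI, jackson, jackson, mul_zero]
  have h1 : ∀ n : ℕ, q ^ n * ((b * q ^ n) ^ (γ - 1) * poch q (0 / (b * q ^ n)) (γ - 1) *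
      g (b * q ^ n)) = q ^ n * ((b * q ^ n) ^ (γ - 1) * g (b * q ^ n)) := by
    intro n
    rw [zero_div, poch_zero]
    ring
  rw [tsum_congr h1]
  ring

lemma pochN_abs_le (hq : 0 < q) (hq1 : q < 1) (z : ℝ) (k : ℕ) :
    |pochN q z k| ≤ Real.exp (|z| / (1 - q)) := by
  rw [pochN, Finset.abs_prod]
  have h1 : ∀ i ∈ range k, |1 - z * q ^ i| ≤ Real.exp (|z| * q ^ i) := by
    intro i _
    calc |1 - z * q ^ i| ≤ |1| + |z * q ^ i| := by
          have := abs_sub (1:ℝ) (z * q ^ i)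
          exact abs_sub _ _
      _ = 1 + |z| * q ^ i := by
          rw [abs_one, abs_mul, abs_pow, abs_of_pos hq]
      _ ≤ Real.exp (|z| * q ^ i) := by
          have := Real.add_one_le_exp (|z| * q ^ i)
          linarith
  calc ∏ i ∈ range k, |1 - z * q ^ i| ≤ ∏ i ∈ range k, Real.exp (|z| * q ^ i) :=
        Finset.prod_le_prod (fun i _ => abs_nonneg _) h1
    _ = Real.exp (∑ i ∈ range k, |z| * q ^ i) := (Real.exp_sum _ _).symm
    _ ≤ Real.exp (|z| / (1 - q)) := by
        apply Real.exp_le_exp.2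
        rw [← Finset.mul_sum]
        have hgs : ∑ i ∈ range k, q ^ i ≤ (1 - q)⁻¹ := by
          rw [geom_sum_eq hq1.ne k]
          have h1q : (0:ℝ) < 1 - q := by linarith
          have heq : ((1:ℝ) - q)⁻¹ * (q - 1) = -1 := by field_simp; ring
          rw [div_le_iff_of_neg (by linarith : q - 1 < 0), heq]
          have := pow_pos hq k
          linarith
        calc |z| * ∑ i ∈ range k, q ^ i ≤ |z| * (1 - q)⁻¹ :=
              mul_le_mul_of_nonneg_left hgs (abs_nonneg z)
          _ = |z| / (1 - q) := by rw [div_eq_mul_inv]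

lemma sfun_abs_le (hq : 0 < q) (hq1 : q < 1) (z : ℝ) (k : ℕ) :
    |sfun q z k| ≤ Real.exp (|z| / (1 - q)) / pochInf q q := by
  rw [sfun, abs_div, abs_of_pos (pochN_pos hq hq1 hq.le hq1 k)]
  exact div_le_div₀ (Real.exp_pos _).le (pochN_abs_le hq hq1 z k)
    (pochInf_pos hq hq1 hq.le hq1) (pochN_q_ge hq hq1 k)

lemma sfun_tendsto (hq : 0 < q) (hq1 : q < 1) {z : ℝ} (h0 : 0 ≤ z) (h1 : z < 1) :
    Tendsto (fun k => sfun q z k) atTop (𝓝 (pochInf q z / pochInf q q)) := by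
  have hA : Tendsto (fun k => pochN q z k) atTop (𝓝 (pochInf q z)) := by
    have := (hasProd_pochInf hq hq1 h0 h1).tendsto_prod_nat
    rw [← pochInf_eq_exp hq hq1 h0 h1] at this
    exact this
  have hB : Tendsto (fun k => pochN q q k) atTop (𝓝 (pochInf q q)) := by
    have := (hasProd_pochInf hq hq1 hq.le hq1).tendsto_prod_nat
    rw [← pochInf_eq_exp hq hq1 hq.le hq1] at this
    exact this
  exact hA.div hB (pochInf_pos hq hq1 hq.le hq1).ne'

/-- convolution kernel -/
def cc (q α β : ℝ) (k : ℕ) : ℝ := ((q:ℝ)^α)^k * sfun q (q^β) k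

/-- inverse convolution kernel -/
def dd (q α β : ℝ) (k : ℕ) : ℝ := ((q:ℝ)^(α+β))^k * sfun q (q^(-β)) k

lemma cc_abs_summable {α β : ℝ} (hq : 0 < q) (hq1 : q < 1) (hα : 0 < α) :
    Summable (fun k => |cc q α β k|) := by
  have hqa0 : (0:ℝ) ≤ q ^ α := (Real.rpow_pos_of_pos hq α).le
  have hqa1 : (q:ℝ) ^ α < 1 := qpow_lt_one hq hq1 hα
  refine Summable.of_nonneg_of_le (fun k => abs_nonneg _) (fun k => ?_)
    ((summable_geometric_of_lt_one hqa0 hqa1).mul_right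
      (Real.exp (|(q:ℝ) ^ β| / (1-q)) / pochInf q q))
  rw [cc, abs_mul, abs_pow, abs_of_nonneg hqa0]
  exact mul_le_mul_of_nonneg_left (sfun_abs_le hq hq1 _ k) (pow_nonneg hqa0 k)

lemma dd_abs_summable {α β : ℝ} (hq : 0 < q) (hq1 : q < 1) (hαβ : 0 < α + β) :
    Summable (fun k => |dd q α β k|) := by
  have hqa0 : (0:ℝ) ≤ q ^ (α+β) := (Real.rpow_pos_of_pos hq _).le
  have hqa1 : (q:ℝ) ^ (α+β) < 1 := qpow_lt_one hq hq1 hαβ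
  refine Summable.of_nonneg_of_le (fun k => abs_nonneg _) (fun k => ?_)
    ((summable_geometric_of_lt_one hqa0 hqa1).mul_right
      (Real.exp (|(q:ℝ) ^ (-β)| / (1-q)) / pochInf q q))
  rw [dd, abs_mul, abs_pow, abs_of_nonneg hqa0]
  exact mul_le_mul_of_nonneg_left (sfun_abs_le hq hq1 _ k) (pow_nonneg hqa0 k)

lemma cc_tsum {α β : ℝ} (hq : 0 < q) (hq1 : q < 1) (hα : 0 < α) (hβ : 0 < β) :
    ∑' k, cc q α β k = pochInf q (q^(α+β)) / pochInf q (q^α) := by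
  have hPq : (0:ℝ) < pochInf q q := pochInf_pos hq hq1 hq.le hq1
  have hPa : (0:ℝ) < pochInf q (q^α) :=
    pochInf_pos hq hq1 (Real.rpow_pos_of_pos hq α).le (qpow_lt_one hq hq1 hα)
  have hqa0 : (0:ℝ) ≤ q ^ α := (Real.rpow_pos_of_pos hq α).le
  have hqa1 : (q:ℝ) ^ α < 1 := qpow_lt_one hq hq1 hα
  set F : ℕ → ℕ → ℝ :=
    fun M k => if k ≤ M then cc q α β k * sfun q (q^α) (M-k) else 0 with hF
  have hFsum : ∀ M, ∑' k, F M k = sfun q (q^(α+β)) M := by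
    intro M
    rw [tsum_eq_sum (s := range (M+1)) (f := fun k => F M k)
      (by intro k hk
          have : ¬ k ≤ M := by simpa using hk
          simp [hF, this])]
    have h2 : ∀ k ∈ range (M+1), F M k
        = sfun q (q^α) (M-k) * sfun q (q^β) k * ((q:ℝ)^α)^k := by
      intro k hk
      have hkM : k ≤ M := by have := mem_range.1 hk; omega
      rw [hF]
      simp only [if_pos hkM, cc]
      ring
    rw [Finset.sum_congr rfl h2, star hq hq1 (q^α) (q^β) M, ← Real.rpow_add hq]
  have hlim1 : Tendsto (fun M => sfun q (q^(α+β)) M) atTop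
      (𝓝 (pochInf q (q^(α+β)) / pochInf q q)) :=
    sfun_tendsto hq hq1 (Real.rpow_pos_of_pos hq _).le (qpow_lt_one hq hq1 (by linarith))
  have hlim2 : Tendsto (fun M => ∑' k, F M k) atTop
      (𝓝 (∑' k, cc q α β k * (pochInf q (q^α) / pochInf q q))) := by
    apply tendsto_tsum_of_dominated_convergence
      (bound := fun k => |cc q α β k| * (Real.exp (|(q:ℝ)^α| / (1-q)) / pochInf q q))
    · exact (cc_abs_summable hq hq1 hα).mul_right _
    · intro k
      apply Tendsto.congr'
        (f₁ := fun M => cc q α β k * sfun q (q^α) (M - k)) ?_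
        (((sfun_tendsto hq hq1 hqa0 hqa1).comp
          (tendsto_sub_atTop_nat k)).const_mul (cc q α β k))
      filter_upwards [Filter.eventually_ge_atTop k] with M hM
      rw [hF]
      simp only [if_pos hM]
    · apply Filter.Eventually.of_forall
      intro M k
      rw [hF]
      by_cases hkM : k ≤ M
      · simp only [if_pos hkM]
        rw [Real.norm_eq_abs, abs_mul]
        exact mul_le_mul_of_nonneg_left (sfun_abs_le hq hq1 _ _) (abs_nonneg _)
      · simp only [if_neg hkM, norm_zero]
        positivity
  have heq : (fun M => ∑' k, F M k) = fun M => sfun q (q^(α+β)) M := funext hFsum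
  rw [heq] at hlim2
  have huniq := tendsto_nhds_unique hlim2 hlim1
  rw [tsum_mul_right] at huniq
  rw [eq_div_iff hPa.ne']
  have h5 : pochInf q q ≠ 0 := hPq.ne'
  field_simp at huniq
  linarith [huniq]

lemma conv_delta {α β : ℝ} (hq : 0 < q) (hq1 : q < 1) (n : ℕ) :
    ∑ k ∈ range (n+1), cc q α β k * dd q α β (n-k) = if n = 0 then 1 else 0 := by
  have h1 : ∀ k ∈ range (n+1), cc q α β k * dd q α β (n-k)
      = ((q:ℝ)^(α+β))^n *
        (sfun q (q^(-β)) (n-k) * sfun q (q^β) k * ((q:ℝ)^(-β))^k) := by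
    intro k hk
    have hkn : k ≤ n := by have := mem_range.1 hk; omega
    rw [cc, dd]
    have e1 : ((q:ℝ)^α)^k = ((q:ℝ)^(α+β))^k * ((q:ℝ)^(-β))^k := by
      rw [← mul_pow, ← Real.rpow_add hq]
      norm_num
    have e2 : ((q:ℝ)^(α+β))^k * ((q:ℝ)^(α+β))^(n-k) = ((q:ℝ)^(α+β))^n := by
      rw [← pow_add]
      congr 1
      omega
    rw [e1]
    linear_combination (((q:ℝ)^(-β))^k * sfun q (q^β) k * sfun q (q^(-β)) (n-k)) * e2
  rw [Finset.sum_congr rfl h1, ← Finset.mul_sum, star hq hq1 (q^(-β)) (q^β) n,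
    ← Real.rpow_add hq, show -β+β = (0:ℝ) by ring, Real.rpow_zero]
  rcases n with _|n
  · simp [sfun, pochN]
  · have hz : pochN q 1 (n+1) = 0 := by
      rw [pochN]
      apply Finset.prod_eq_zero (Finset.mem_range.2 (Nat.succ_pos n))
      simp
    simp [sfun, hz]

lemma conv_inv {α β : ℝ} (hq : 0 < q) (hq1 : q < 1) (u : ℕ → ℝ) (n : ℕ) :
    ∑ j ∈ range (n+1), dd q α β (n-j) * (∑ i ∈ range (j+1), cc q α β (j-i) * u i)
      = u n := by
  have h1 : ∀ j ∈ range (n+1),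
      dd q α β (n-j) * (∑ i ∈ range (j+1), cc q α β (j-i) * u i)
        = ∑ i ∈ range (j+1), dd q α β (n-j) * (cc q α β (j-i) * u i) := by
    intro j _
    rw [Finset.mul_sum]
  rw [Finset.sum_congr rfl h1,
    tri_swap (fun j i => dd q α β (n-j) * (cc q α β (j-i) * u i)) n]
  have h2 : ∀ i ∈ range (n+1),
      (∑ k ∈ range (n-i+1), dd q α β (n-(i+k)) * (cc q α β ((i+k)-i) * u i))
        = (if n - i = 0 then 1 else 0) * u i := by
    intro i hi
    have hin : i ≤ n := by have := mem_range.1 hi; omega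
    have h3 : ∀ k ∈ range (n-i+1), dd q α β (n-(i+k)) * (cc q α β ((i+k)-i) * u i)
        = (cc q α β k * dd q α β ((n-i)-k)) * u i := by
      intro k hk
      have hkni : k ≤ n - i := by have := mem_range.1 hk; omega
      rw [show (i+k)-i = k by omega, show n-(i+k) = (n-i)-k by omega]
      ring
    rw [Finset.sum_congr rfl h3, ← Finset.sum_mul, conv_delta hq hq1 (n-i)]
  rw [Finset.sum_congr rfl h2,
    Finset.sum_eq_single n
      (fun i hi hne => by
        have := mem_range.1 hi
        rw [if_neg (by omega)]
        ring)
      (fun h => absurd (self_mem_range_succ n) h)]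
  simp

lemma zero_const_eq {b α β : ℝ} (hq : 0 < q) (hq1 : q < 1) (hb : 0 < b)
    (hα : 0 < α) (hβ : 0 < β) :
    (qGamma q α)⁻¹ * ((1-q)*b) * (((qGamma q β)⁻¹ * ((1-q)*b) *
      (b^(α-1) * b^(β-1) * (pochInf q q / pochInf q (q^β)))) *
        (pochInf q (q^(α+β)) / pochInf q (q^α)))
    = (qGamma q (α+β))⁻¹ * ((1-q)*b) * b^(α+β-1) := by
  have h1q : (0:ℝ) < 1 - q := by linarith
  have e1 : (b:ℝ)^(α+β-1) = b^(α-1) * b^(β-1) * b^(1:ℝ) := by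
    rw [show α+β-1 = (α-1)+(β-1)+(1:ℝ) by ring, Real.rpow_add hb, Real.rpow_add hb]
  have e2 : ((1-q):ℝ)^(1-(α+β)) = (1-q)^(1-α) * (1-q)^(1-β) * ((1-q)^(-1:ℝ)) := by
    rw [show 1-(α+β) = (1-α)+(1-β)+(-1:ℝ) by ring, Real.rpow_add h1q, Real.rpow_add h1q]
  have hPq : pochInf q q ≠ 0 := (pochInf_pos hq hq1 hq.le hq1).ne'
  have hPa : pochInf q (q^α) ≠ 0 :=
    (pochInf_pos hq hq1 (Real.rpow_pos_of_pos hq α).le (qpow_lt_one hq hq1 hα)).ne'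
  have hPb : pochInf q (q^β) ≠ 0 :=
    (pochInf_pos hq hq1 (Real.rpow_pos_of_pos hq β).le (qpow_lt_one hq hq1 hβ)).ne'
  have hPab : pochInf q (q^(α+β)) ≠ 0 :=
    (pochInf_pos hq hq1 (Real.rpow_pos_of_pos hq (α+β)).le
      (qpow_lt_one hq hq1 (by linarith))).ne'
  have hw1 : ((1-q):ℝ)^(1-α) ≠ 0 := (Real.rpow_pos_of_pos h1q _).ne'
  have hw2 : ((1-q):ℝ)^(1-β) ≠ 0 := (Real.rpow_pos_of_pos h1q _).ne'
  rw [qGamma, qGamma, qGamma, e1, e2, Real.rpow_neg_one, Real.rpow_one]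
  field_simp

lemma zero_case {b α β : ℝ} (hq : 0 < q) (hq1 : q < 1) (hb : 0 < b)
    (hα : 0 < α) (hβ : 0 < β) (f : ℝ → ℝ) :
    Iright q b α (Iright q b β f) 0 = Iright q b (α + β) f 0 := by
  have hαβ : (0:ℝ) < α + β := by linarith
  rw [Iright_zero hq hq1 hb α _, Iright_zero hq hq1 hb (α+β) f]
  have hLt : ∀ m : ℕ, q^m * ((b*q^m)^(α-1) * Iright q b β f (b*q^m))
      = ((qGamma q β)⁻¹ * ((1-q)*b) *
          (b^(α-1) * b^(β-1) * (pochInf q q / pochInf q (q^β)))) *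
        ∑ i ∈ range (m+1), cc q α β (m-i) * (((q:ℝ)^(α+β))^i * f (b*q^i)) := by
    intro m
    rw [Iright_grid hq hq1 hb β f m]
    have hinner : ∀ j ∈ range (m+1),
        q^j * ((b*q^j)^(β-1) * poch q (q*(b*q^m)/(b*q^j)) (β-1) * f (b*q^j))
        = q^j * ((b*q^j)^(β-1) *
            (sfun q (q^β) (m-j) * (pochInf q q / pochInf q (q^β))) * f (b*q^j)) := by
      intro j hj
      have hjm : j ≤ m := by have := mem_range.1 hj; omega
      rw [poch_grid hq hb m j hjm, show m+1-j = (m-j)+1 by omega,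
        poch_eq_sfun hq hq1 hβ (m-j)]
    rw [Finset.sum_congr rfl hinner]
    simp only [Finset.mul_sum]
    apply Finset.sum_congr rfl
    intro j hj
    have hjm : j ≤ m := by have := mem_range.1 hj; omega
    have hm1 : ((q:ℝ)^α)^(m-j) * ((q:ℝ)^(α+β))^j
        = (q^m * ((q:ℝ)^m)^(α-1)) * (q^j * ((q:ℝ)^j)^(β-1)) := by
      rw [show ((q:ℝ)^(α+β)) = (q:ℝ)^α * (q:ℝ)^β from Real.rpow_add hq α β, mul_pow,
        ← mul_assoc, ← pow_add, Nat.sub_add_cancel hjm, ← qpow_split hq α m,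
        ← qpow_split hq β j]
    rw [Real.mul_rpow hb.le (pow_nonneg hq.le m), Real.mul_rpow hb.le (pow_nonneg hq.le j),
      cc]
    linear_combination (-((qGamma q β)⁻¹ * ((1-q)*b) * b^(α-1) * b^(β-1) *
      (pochInf q q / pochInf q (q^β)) * sfun q (q^β) (m-j) * f (b*q^j))) * hm1
  rw [tsum_congr hLt, tsum_mul_left]
  have hRt : ∀ m : ℕ, q^m * ((b*q^m)^(α+β-1) * f (b*q^m))
      = b^(α+β-1) * (((q:ℝ)^(α+β))^m * f (b*q^m)) := by
    intro m
    rw [Real.mul_rpow hb.le (pow_nonneg hq.le m), qpow_split hq (α+β) m]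
    ring
  rw [tsum_congr hRt, tsum_mul_left]
  by_cases hsu : Summable (fun j : ℕ => ((q:ℝ)^(α+β))^j * f (b*q^j))
  · have hcu : Summable (fun k => ‖cc q α β k‖) := by
      simpa only [Real.norm_eq_abs] using cc_abs_summable (β := β) hq hq1 hα
    have huu : Summable (fun j : ℕ => ‖((q:ℝ)^(α+β))^j * f (b*q^j)‖) := by
      simpa only [Real.norm_eq_abs] using summable_abs_iff.2 hsu
    have hcauchy := tsum_mul_tsum_eq_tsum_sum_range_of_summable_norm hcu huu
    have hrefl : ∀ m : ℕ,
        (∑ k ∈ range (m+1), cc q α β k * (((q:ℝ)^(α+β))^(m-k) * f (b*q^(m-k))))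
        = ∑ i ∈ range (m+1), cc q α β (m-i) * (((q:ℝ)^(α+β))^i * f (b*q^i)) := by
      intro m
      rw [← Finset.sum_range_reflect
        (fun k => cc q α β k * (((q:ℝ)^(α+β))^(m-k) * f (b*q^(m-k)))) (m+1)]
      apply Finset.sum_congr rfl
      intro i hi
      have him : i ≤ m := by have := mem_range.1 hi; omega
      rw [show m+1-1-i = m-i by omega, show m-(m-i) = i by omega]
    rw [tsum_congr hrefl] at hcauchy
    rw [← hcauchy, cc_tsum hq hq1 hα hβ]
    linear_combination (∑' (j : ℕ), ((q:ℝ)^(α+β))^j * f (b*q^j)) *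
      zero_const_eq hq hq1 hb hα hβ
  · have hnv : ¬ Summable (fun m : ℕ =>
        ∑ i ∈ range (m+1), cc q α β (m-i) * (((q:ℝ)^(α+β))^i * f (b*q^i))) := by
      intro hv
      apply hsu
      have hdd : Summable (fun k => ‖dd q α β k‖) := by
        simpa only [Real.norm_eq_abs] using dd_abs_summable (α := α) (β := β) hq hq1 hαβ
      have hvn : Summable (fun m : ℕ =>
          ‖∑ i ∈ range (m+1), cc q α β (m-i) * (((q:ℝ)^(α+β))^i * f (b*q^i))‖) := by
        simpa only [Real.norm_eq_abs] using summable_abs_iff.2 hv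
      have h2 := (summable_norm_sum_mul_range_of_summable_norm hdd hvn).of_norm
      apply h2.congr
      intro n
      have hrefl2 : (∑ k ∈ range (n+1), dd q α β k *
          (∑ i ∈ range ((n-k)+1), cc q α β ((n-k)-i) * (((q:ℝ)^(α+β))^i * f (b*q^i))))
          = ∑ j ∈ range (n+1), dd q α β (n-j) *
            (∑ i ∈ range (j+1), cc q α β (j-i) * (((q:ℝ)^(α+β))^i * f (b*q^i))) := by
        rw [← Finset.sum_range_reflect
          (fun k => dd q α β k * (∑ i ∈ range ((n-k)+1),
            cc q α β ((n-k)-i) * (((q:ℝ)^(α+β))^i * f (b*q^i)))) (n+1)]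
        apply Finset.sum_congr rfl
        intro j hj
        have hjn : j ≤ n := by have := mem_range.1 hj; omega
        rw [show n+1-1-j = n-j by omega, show n-(n-j) = j by omega]
      rw [hrefl2, conv_inv hq hq1 (fun i => ((q:ℝ)^(α+β))^i * f (b*q^i)) n]
    rw [tsum_eq_zero_of_not_summable hnv, tsum_eq_zero_of_not_summable hsu]
    ring

end Stmt2Aux

/-- semigroup property of the right-sided Riemann–Liouville
q-fractional integral on `A^*_{q,b}`. -/
theorem stmt2 (q b α β : ℝ) (hq : 0 < q) (hq1 : q < 1) (hb : 0 < b)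
    (hα : 0 < α) (hβ : 0 < β) (f : ℝ → ℝ) (x : ℝ)
    (hx : x = 0 ∨ ∃ n : ℕ, x = b * q ^ n) :
    QFrac.Iright q b α (QFrac.Iright q b β f) x = QFrac.Iright q b (α + β) f x := by
  rcases hx with rfl | ⟨n, rfl⟩
  · exact Stmt2Aux.zero_case hq hq1 hb hα hβ f
  · exact Stmt2Aux.grid_case hq hq1 hb hα hβ f n
end
end

section
/- Let α > 0, 0 < q < 1, a > 0. If f is q-regular at zero and continuous in the sense of C(A*_{q,a}), then I^α_{q,0^+} f ∈ C(A*_{q,a}) and the sup-norm bound ‖I^α_{q,0^+} f‖ ≤ (a^α/Γ_q(α+1)) ‖f‖ holds. -/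
open Filter

noncomputable section

section Stmt9Aux

open Real Filter Topology

variable {q : ℝ}

private lemma aux_fac_pos (hq : 0 < q) (hq1 : q < 1) {z : ℝ} (hz0 : 0 ≤ z) (hz1 : z < 1)
    (k : ℕ) : 0 < 1 - z * q ^ k := by
  have h1 : q ^ k ≤ 1 := pow_le_one₀ hq.le hq1.le
  have h2 : 0 ≤ q ^ k := pow_nonneg hq.le k
  nlinarith

private lemma aux_neg_log_le (hq : 0 < q) (hq1 : q < 1) {z : ℝ} (hz0 : 0 ≤ z)
    {c : ℝ} (hc : z ≤ c) (hc1 : c < 1) (k : ℕ) :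
    -Real.log (1 - z * q ^ k) ≤ z / (1 - c) * q ^ k := by
  have hz1 : z < 1 := lt_of_le_of_lt hc hc1
  have hp := aux_fac_pos hq hq1 hz0 hz1 k
  have h2 : 0 ≤ q ^ k := pow_nonneg hq.le k
  have h1 : q ^ k ≤ 1 := pow_le_one₀ hq.le hq1.le
  have hzc : z * q ^ k ≤ c := le_trans (by nlinarith) hc
  have hlog := Real.log_le_sub_one_of_pos (inv_pos.2 hp)
  rw [Real.log_inv] at hlog
  have h3 : (1 - z * q ^ k)⁻¹ - 1 = z * q ^ k / (1 - z * q ^ k) := by field_simp; ring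
  have h4 : z * q ^ k / (1 - z * q ^ k) ≤ z * q ^ k / (1 - c) := by
    rw [div_le_div_iff₀ hp (by linarith : (0:ℝ) < 1 - c)]
    nlinarith [mul_le_mul_of_nonneg_left hzc (mul_nonneg hz0 h2)]
  calc -Real.log (1 - z * q ^ k) ≤ (1 - z * q ^ k)⁻¹ - 1 := by linarith
    _ = z * q ^ k / (1 - z * q ^ k) := h3
    _ ≤ z * q ^ k / (1 - c) := h4
    _ = z / (1 - c) * q ^ k := by ring

private lemma aux_summable_neg_log (hq : 0 < q) (hq1 : q < 1) {z : ℝ} (hz0 : 0 ≤ z)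
    (hz1 : z < 1) : Summable fun k : ℕ => -Real.log (1 - z * q ^ k) := by
  refine Summable.of_nonneg_of_le (fun k => ?_) (fun k => aux_neg_log_le hq hq1 hz0 le_rfl hz1 k)
    ((summable_geometric_of_lt_one hq.le hq1).mul_left (z / (1 - z)))
  have hp := aux_fac_pos hq hq1 hz0 hz1 k
  have h2 : 0 ≤ q ^ k := pow_nonneg hq.le k
  have : Real.log (1 - z * q ^ k) ≤ 0 := Real.log_nonpos (by positivity) (by nlinarith)
  linarith

private lemma aux_summable_log (hq : 0 < q) (hq1 : q < 1) {z : ℝ} (hz0 : 0 ≤ z)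
    (hz1 : z < 1) : Summable fun k : ℕ => Real.log (1 - z * q ^ k) := by
  simpa using (aux_summable_neg_log hq hq1 hz0 hz1).neg

private lemma aux_hasProd (hq : 0 < q) (hq1 : q < 1) {z : ℝ} (hz0 : 0 ≤ z) (hz1 : z < 1) :
    HasProd (fun k : ℕ => 1 - z * q ^ k)
      (Real.exp (∑' k : ℕ, Real.log (1 - z * q ^ k))) := by
  have h := (aux_summable_log hq hq1 hz0 hz1).hasSum.rexp
  have he : (fun k : ℕ => 1 - z * q ^ k) = rexp ∘ fun k : ℕ => Real.log (1 - z * q ^ k) :=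
    funext fun k => (Real.exp_log (aux_fac_pos hq hq1 hz0 hz1 k)).symm
  rw [he]
  exact h

private lemma aux_pochInf_eq (hq : 0 < q) (hq1 : q < 1) {z : ℝ} (hz0 : 0 ≤ z) (hz1 : z < 1) :
    QFrac.pochInf q z = Real.exp (∑' k : ℕ, Real.log (1 - z * q ^ k)) := by
  rw [QFrac.pochInf]
  exact (aux_hasProd hq hq1 hz0 hz1).tprod_eq

private lemma aux_pochInf_pos (hq : 0 < q) (hq1 : q < 1) {z : ℝ} (hz0 : 0 ≤ z) (hz1 : z < 1) :
    0 < QFrac.pochInf q z := by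
  rw [aux_pochInf_eq hq hq1 hz0 hz1]; exact Real.exp_pos _

private lemma aux_pochInf_one (hq : 0 < q) (hq1 : q < 1) : QFrac.pochInf q 1 = 0 := by
  have h : HasProd (fun k : ℕ => 1 - 1 * q ^ k) 0 := by
    rw [HasProd]
    have he : ∀ᶠ s : Finset ℕ in atTop, (∏ i ∈ s, (1 - 1 * q ^ i)) = 0 := by
      filter_upwards [Filter.eventually_ge_atTop ({0} : Finset ℕ)] with s hs
      exact Finset.prod_eq_zero (hs (Finset.mem_singleton_self 0)) (by norm_num)
    exact Tendsto.congr' (he.mono fun s h => h.symm) tendsto_const_nhds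
  rw [QFrac.pochInf]
  exact h.tprod_eq

private lemma aux_peel (hq : 0 < q) (hq1 : q < 1) {z : ℝ} (hz0 : 0 ≤ z) (hz1 : z ≤ 1) :
    QFrac.pochInf q z = (1 - z) * QFrac.pochInf q (z * q) := by
  rcases eq_or_lt_of_le hz1 with h | h
  · rw [h, aux_pochInf_one hq hq1]
    simp
  · have hz0' : 0 ≤ z * q := mul_nonneg hz0 hq.le
    have hz1' : z * q < 1 := by
      have hzz : z * q ≤ z := by nlinarith
      exact lt_of_le_of_lt hzz h
    have hm : Multipliable fun n : ℕ => 1 - z * q ^ (n + 1) := by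
      have hmm := (aux_hasProd hq hq1 hz0' hz1').multipliable
      have he : (fun n : ℕ => 1 - z * q * q ^ n) = fun n : ℕ => 1 - z * q ^ (n + 1) := by
        funext n; ring
      rwa [he] at hmm
    have ht := tprod_eq_zero_mul' (f := fun n : ℕ => 1 - z * q ^ n) hm
    rw [QFrac.pochInf, QFrac.pochInf, ht]
    congr 1
    · norm_num
    · exact tprod_congr fun n => by ring

private lemma aux_tsum_log_bound (hq : 0 < q) (hq1 : q < 1) {z : ℝ} (hz0 : 0 ≤ z)
    (hzq : z ≤ q) : |∑' k : ℕ, Real.log (1 - z * q ^ k)| ≤ z / (1 - q) ^ 2 := by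
  have hz1 : z < 1 := lt_of_le_of_lt hzq hq1
  have hN := aux_summable_neg_log hq hq1 hz0 hz1
  have h1 : ∑' k : ℕ, Real.log (1 - z * q ^ k) ≤ 0 := by
    refine tsum_nonpos fun k => ?_
    have hp := aux_fac_pos hq hq1 hz0 hz1 k
    have h2 : 0 ≤ q ^ k := pow_nonneg hq.le k
    exact Real.log_nonpos (by positivity) (by nlinarith)
  rw [abs_of_nonpos h1, ← tsum_neg]
  have h2 : ∑' k : ℕ, -Real.log (1 - z * q ^ k) ≤ ∑' k : ℕ, z / (1 - q) * q ^ k :=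
    Summable.tsum_le_tsum (fun k => aux_neg_log_le hq hq1 hz0 hzq hq1 k) hN
      ((summable_geometric_of_lt_one hq.le hq1).mul_left _)
  have h3 : ∑' k : ℕ, z / (1 - q) * q ^ k = z / (1 - q) ^ 2 := by
    rw [tsum_mul_left, tsum_geometric_of_lt_one hq.le hq1]
    have h0 : (1 : ℝ) - q ≠ 0 := by linarith
    field_simp
  linarith

private lemma aux_arg {q : ℝ} (α : ℝ) (hq : 0 < q) (n : ℕ) :
    (q : ℝ) ^ (n + 1) * q ^ (α - 1) = q ^ n * q ^ α := by
  rw [pow_succ, mul_assoc]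
  congr 1
  calc q * q ^ (α - 1) = q ^ (1 : ℝ) * q ^ (α - 1) := by rw [Real.rpow_one]
    _ = q ^ (1 + (α - 1)) := (Real.rpow_add hq 1 (α - 1)).symm
    _ = q ^ α := by rw [show (1 : ℝ) + (α - 1) = α by ring]

private lemma aux_key {q α : ℝ} (hq : 0 < q) (hq1 : q < 1) (hα : 0 < α) :
    HasSum (fun n : ℕ => q ^ n * QFrac.poch q (q ^ (n + 1)) (α - 1)) (1 / (1 - q ^ α)) := by
  have hqα1 : q ^ α < 1 := Real.rpow_lt_one hq.le hq1 hα
  have hqα0 : 0 < q ^ α := Real.rpow_pos_of_pos hq α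
  have h1qα : (0 : ℝ) < 1 - q ^ α := by linarith
  have hvpos : ∀ n : ℕ, 0 < q ^ n * q ^ α := fun n => mul_pos (pow_pos hq n) hqα0
  have hvlt : ∀ n : ℕ, q ^ n * q ^ α < 1 := fun n => by
    have h1 : q ^ n ≤ 1 := pow_le_one₀ hq.le hq1.le
    nlinarith [pow_pos hq n]
  have hPv : ∀ n : ℕ, 0 < QFrac.pochInf q (q ^ n * q ^ α) := fun n =>
    aux_pochInf_pos hq hq1 (hvpos n).le (hvlt n)
  have hPu : ∀ n : ℕ, 0 < QFrac.pochInf q (q ^ (n + 1)) := fun n =>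
    aux_pochInf_pos hq hq1 (pow_nonneg hq.le _) (pow_lt_one₀ hq.le hq1 n.succ_ne_zero)
  set A : ℕ → ℝ := fun n => QFrac.pochInf q (q ^ n) / QFrac.pochInf q (q ^ n * q ^ α) with hA
  have hTval : ∀ n : ℕ, QFrac.poch q (q ^ (n + 1)) (α - 1)
      = QFrac.pochInf q (q ^ (n + 1)) / QFrac.pochInf q (q ^ n * q ^ α) := fun n => by
    rw [QFrac.poch, aux_arg α hq n]
  have hpos : ∀ n : ℕ, 0 ≤ q ^ n * QFrac.poch q (q ^ (n + 1)) (α - 1) := by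
    intro n
    have := div_pos (hPu n) (hPv n)
    rw [← hTval n] at this
    exact mul_nonneg (pow_nonneg hq.le n) this.le
  have hpeelu : ∀ n : ℕ, QFrac.pochInf q (q ^ n)
      = (1 - q ^ n) * QFrac.pochInf q (q ^ (n + 1)) := by
    intro n
    have h := aux_peel hq hq1 (pow_nonneg hq.le n) (pow_le_one₀ hq.le hq1.le)
    rwa [← pow_succ] at h
  have hpeelv : ∀ n : ℕ, QFrac.pochInf q (q ^ n * q ^ α)
      = (1 - q ^ n * q ^ α) * QFrac.pochInf q (q ^ (n + 1) * q ^ α) := by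
    intro n
    have h := aux_peel hq hq1 (hvpos n).le (hvlt n).le
    rwa [show q ^ n * q ^ α * q = q ^ (n + 1) * q ^ α by rw [pow_succ]; ring] at h
  have htel : ∀ n : ℕ, q ^ n * QFrac.poch q (q ^ (n + 1)) (α - 1)
      = A (n + 1) / (1 - q ^ α) - A n / (1 - q ^ α) := by
    intro n
    rw [hTval n]
    simp only [hA]
    rw [hpeelu n, hpeelv n]
    have e1 : (1 : ℝ) - q ^ n * q ^ α ≠ 0 := ne_of_gt (by linarith [hvlt n])
    have e2 : QFrac.pochInf q (q ^ (n + 1) * q ^ α) ≠ 0 := ne_of_gt (hPv (n + 1))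
    have e3 : (1 : ℝ) - q ^ α ≠ 0 := ne_of_gt h1qα
    field_simp
    ring
  have hA0 : A 0 = 0 := by
    simp only [hA, pow_zero]
    rw [aux_pochInf_one hq hq1, zero_div]
  have hSu : Tendsto (fun n : ℕ => ∑' k : ℕ, Real.log (1 - q ^ n * q ^ k)) atTop (𝓝 0) := by
    apply squeeze_zero_norm' (a := fun n : ℕ => q ^ n / (1 - q) ^ 2)
    · filter_upwards [eventually_ge_atTop 1] with n hn
      have hzq : q ^ n ≤ q := by
        calc q ^ n ≤ q ^ 1 := pow_le_pow_of_le_one hq.le hq1.le hn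
          _ = q := pow_one q
      simpa [Real.norm_eq_abs] using aux_tsum_log_bound hq hq1 (pow_nonneg hq.le n) hzq
    · simpa using (tendsto_pow_atTop_nhds_zero_of_lt_one hq.le hq1).div_const ((1 - q) ^ 2)
  have hSv : Tendsto (fun n : ℕ => ∑' k : ℕ, Real.log (1 - q ^ n * q ^ α * q ^ k))
      atTop (𝓝 0) := by
    apply squeeze_zero_norm' (a := fun n : ℕ => q ^ n / (1 - q) ^ 2)
    · filter_upwards [eventually_ge_atTop 1] with n hn
      have hzq : q ^ n * q ^ α ≤ q := by
        have h1 : q ^ n ≤ q := by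
          calc q ^ n ≤ q ^ 1 := pow_le_pow_of_le_one hq.le hq1.le hn
            _ = q := pow_one q
        nlinarith [pow_pos hq n]
      have hb := aux_tsum_log_bound hq hq1 (hvpos n).le hzq
      have hmono : q ^ n * q ^ α / (1 - q) ^ 2 ≤ q ^ n / (1 - q) ^ 2 := by
        have : q ^ n * q ^ α ≤ q ^ n := by nlinarith [pow_pos hq n]
        gcongr
      rw [Real.norm_eq_abs]
      exact le_trans hb hmono
    · simpa using (tendsto_pow_atTop_nhds_zero_of_lt_one hq.le hq1).div_const ((1 - q) ^ 2)
  have hAlim : Tendsto A atTop (𝓝 1) := by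
    have h1 : Tendsto (fun n : ℕ => Real.exp (∑' k : ℕ, Real.log (1 - q ^ n * q ^ k)) /
        Real.exp (∑' k : ℕ, Real.log (1 - q ^ n * q ^ α * q ^ k))) atTop (𝓝 1) := by
      have h2 := (((Real.continuous_exp.tendsto 0).comp hSu).div
        ((Real.continuous_exp.tendsto 0).comp hSv)) (by simp)
      rw [Real.exp_zero, div_one] at h2
      exact h2
    refine Tendsto.congr' ?_ h1
    filter_upwards [eventually_ge_atTop 1] with n hn
    have hu1 : q ^ n < 1 := pow_lt_one₀ hq.le hq1 (by omega)
    simp only [hA]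
    rw [aux_pochInf_eq hq hq1 (pow_nonneg hq.le n) hu1,
      aux_pochInf_eq hq hq1 (hvpos n).le (hvlt n)]
  rw [hasSum_iff_tendsto_nat_of_nonneg hpos]
  have hps : ∀ N : ℕ, ∑ i ∈ Finset.range N, (q ^ i * QFrac.poch q (q ^ (i + 1)) (α - 1))
      = A N / (1 - q ^ α) := by
    intro N
    rw [Finset.sum_congr rfl fun i _ => htel i,
      Finset.sum_range_sub (fun i => A i / (1 - q ^ α)) N, hA0, zero_div, sub_zero]
  refine Tendsto.congr (fun N => (hps N).symm) ?_
  exact hAlim.div_const _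

private lemma aux_T_pos {q α : ℝ} (hq : 0 < q) (hq1 : q < 1) (hα : 0 < α) (n : ℕ) :
    0 < QFrac.poch q (q ^ (n + 1)) (α - 1) := by
  have hqα1 : q ^ α < 1 := Real.rpow_lt_one hq.le hq1 hα
  have hqα0 : 0 < q ^ α := Real.rpow_pos_of_pos hq α
  have hvpos : 0 < q ^ n * q ^ α := mul_pos (pow_pos hq n) hqα0
  have hvlt : q ^ n * q ^ α < 1 := by
    have h1 : q ^ n ≤ 1 := pow_le_one₀ hq.le hq1.le
    nlinarith [pow_pos hq n]
  rw [QFrac.poch, aux_arg α hq n]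
  exact div_pos
    (aux_pochInf_pos hq hq1 (pow_nonneg hq.le _) (pow_lt_one₀ hq.le hq1 n.succ_ne_zero))
    (aux_pochInf_pos hq hq1 hvpos.le hvlt)
end Stmt9Aux

/-- boundedness of `I^α_{q,0^+}` on `C(A^*_{q,a})`. -/
theorem stmt9 (q a α : ℝ) (hq : 0 < q) (hq1 : q < 1) (ha : 0 < a) (hα : 0 < α)
    (f : ℝ → ℝ) (hf : QFrac.qRegular q a f) :
    QFrac.qRegular q a (QFrac.Ileft q α f) ∧
      QFrac.supNorm q a (QFrac.Ileft q α f) ≤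
        a ^ α / QFrac.qGamma q (α + 1) * QFrac.supNorm q a f := by
  have hq0 : (0:ℝ) ≤ q := hq.le
  have hqα1 : q ^ α < 1 := Real.rpow_lt_one hq.le hq1 hα
  have hqα0 : 0 < q ^ α := Real.rpow_pos_of_pos hq α
  have h1qα : (0:ℝ) < 1 - q ^ α := by linarith
  have h1q : (0:ℝ) < 1 - q := by linarith
  have hf' : Tendsto (fun n : ℕ => f (a * q ^ n)) atTop (nhds (f 0)) := hf
  set M := QFrac.supNorm q a f with hM
  have hfb : ∀ n : ℕ, |f (a * q ^ n)| ≤ M := by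
    intro n
    rw [hM]
    simp only [QFrac.supNorm]
    refine le_trans ?_ (le_max_left _ _)
    exact le_ciSup hf'.abs.bddAbove_range n
  have hM0 : 0 ≤ M := le_trans (abs_nonneg (f 0)) (le_max_right _ _)
  have hΓpos : 0 < QFrac.qGamma q α := by
    rw [QFrac.qGamma]
    exact mul_pos (div_pos (aux_pochInf_pos hq hq1 hq0 hq1)
      (aux_pochInf_pos hq hq1 hqα0.le hqα1)) (Real.rpow_pos_of_pos h1q _)
  have hΓ1 : QFrac.qGamma q (α + 1) = QFrac.qGamma q α * (1 - q ^ α) / (1 - q) := by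
    rw [QFrac.qGamma, QFrac.qGamma]
    have hpeel : QFrac.pochInf q (q ^ α) = (1 - q ^ α) * QFrac.pochInf q (q ^ (α + 1)) := by
      have h := aux_peel hq hq1 hqα0.le hqα1.le
      rwa [show (q:ℝ) ^ α * q = q ^ (α + 1) by rw [Real.rpow_add hq, Real.rpow_one]] at h
    have hre : (1 - q : ℝ) ^ (1 - (α + 1)) = (1 - q) ^ (1 - α) / (1 - q) := by
      rw [show (1 - (α + 1) : ℝ) = (1 - α) - 1 by ring, Real.rpow_sub h1q, Real.rpow_one]
    rw [hpeel, hre]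
    have e2 : QFrac.pochInf q (q ^ (α + 1)) ≠ 0 := ne_of_gt (aux_pochInf_pos hq hq1
      (Real.rpow_pos_of_pos hq _).le (Real.rpow_lt_one hq.le hq1 (by linarith)))
    have e3 : (1 - q ^ α : ℝ) ≠ 0 := ne_of_gt h1qα
    have e4 : (1 - q : ℝ) ≠ 0 := ne_of_gt h1q
    have e5 : ((1 - q : ℝ) ^ (1 - α)) ≠ 0 := ne_of_gt (Real.rpow_pos_of_pos h1q _)
    field_simp
  have hΓ1pos : 0 < QFrac.qGamma q (α + 1) := by
    rw [hΓ1]; exact div_pos (mul_pos hΓpos h1qα) h1q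
  have hx : ∀ m : ℕ, (0:ℝ) < a * q ^ m := fun m => mul_pos ha (pow_pos hq m)
  have hIzero : QFrac.Ileft q α f 0 = 0 := by simp [QFrac.Ileft, QFrac.jackson]
  have hkey := aux_key hq hq1 hα
  have hIval : ∀ m : ℕ, QFrac.Ileft q α f (a * q ^ m)
      = (a * q ^ m) ^ (α - 1) / QFrac.qGamma q α * ((1 - q) * (a * q ^ m) *
        ∑' n : ℕ, q ^ n * (QFrac.poch q (q ^ (n + 1)) (α - 1) * f (a * q ^ m * q ^ n))) := by
    intro m
    rw [QFrac.Ileft, QFrac.jackson]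
    congr 2
    refine tsum_congr fun n => ?_
    rw [show q * (a * q ^ m * q ^ n) / (a * q ^ m) = q ^ (n + 1) from by
      field_simp [ha.ne', (pow_pos hq m).ne']; ring]
  have hsummand : ∀ m n : ℕ, |q ^ n * (QFrac.poch q (q ^ (n + 1)) (α - 1) * f (a * q ^ m * q ^ n))|
      ≤ M * (q ^ n * QFrac.poch q (q ^ (n + 1)) (α - 1)) := by
    intro m n
    have hT := aux_T_pos hq hq1 hα n
    have hfn : |f (a * q ^ m * q ^ n)| ≤ M := by
      rw [show a * q ^ m * q ^ n = a * q ^ (m + n) by rw [pow_add]; ring]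
      exact hfb (m + n)
    rw [abs_mul, abs_mul, abs_of_nonneg (pow_nonneg hq0 n), abs_of_nonneg hT.le]
    calc q ^ n * (QFrac.poch q (q ^ (n + 1)) (α - 1) * |f (a * q ^ m * q ^ n)|)
        ≤ q ^ n * (QFrac.poch q (q ^ (n + 1)) (α - 1) * M) :=
          mul_le_mul_of_nonneg_left (mul_le_mul_of_nonneg_left hfn hT.le) (pow_nonneg hq0 n)
      _ = M * (q ^ n * QFrac.poch q (q ^ (n + 1)) (α - 1)) := by ring
  have hsumM : Summable (fun n : ℕ => M * (q ^ n * QFrac.poch q (q ^ (n + 1)) (α - 1))) :=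
    hkey.summable.mul_left M
  have habs : ∀ m : ℕ, Summable fun n : ℕ =>
      |q ^ n * (QFrac.poch q (q ^ (n + 1)) (α - 1) * f (a * q ^ m * q ^ n))| := fun m =>
    Summable.of_nonneg_of_le (fun n => abs_nonneg _) (hsummand m) hsumM
  have htsum_bound : ∀ m : ℕ,
      |∑' n : ℕ, q ^ n * (QFrac.poch q (q ^ (n + 1)) (α - 1) * f (a * q ^ m * q ^ n))|
      ≤ M / (1 - q ^ α) := by
    intro m
    calc |∑' n : ℕ, q ^ n * (QFrac.poch q (q ^ (n + 1)) (α - 1) * f (a * q ^ m * q ^ n))|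
        ≤ ∑' n : ℕ, |q ^ n * (QFrac.poch q (q ^ (n + 1)) (α - 1) * f (a * q ^ m * q ^ n))| := by
          have hh := norm_tsum_le_tsum_norm
            (f := fun n : ℕ => q ^ n * (QFrac.poch q (q ^ (n + 1)) (α - 1) * f (a * q ^ m * q ^ n)))
            (by simp only [Real.norm_eq_abs]; exact habs m)
          simp only [Real.norm_eq_abs] at hh
          exact hh
      _ ≤ ∑' n : ℕ, M * (q ^ n * QFrac.poch q (q ^ (n + 1)) (α - 1)) :=
          Summable.tsum_le_tsum (hsummand m) (habs m) hsumM
      _ = M * (1 / (1 - q ^ α)) := by rw [tsum_mul_left, hkey.tsum_eq]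
      _ = M / (1 - q ^ α) := by ring
  have hrw : ∀ m : ℕ, (a * q ^ m : ℝ) ^ (α - 1) * (a * q ^ m) = a ^ α * (q ^ α) ^ m := by
    intro m
    have h2 : ((q:ℝ) ^ m) ^ α = (q ^ α) ^ m := by
      rw [← Real.rpow_natCast q m, ← Real.rpow_natCast (q ^ α) m, ← Real.rpow_mul hq0,
        ← Real.rpow_mul hq0, mul_comm]
    rw [show (a * q ^ m : ℝ) ^ (α - 1) * (a * q ^ m)
        = (a * q ^ m) ^ (α - 1) * (a * q ^ m) ^ (1:ℝ) by rw [Real.rpow_one],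
      ← Real.rpow_add (hx m), show α - 1 + 1 = α by ring,
      Real.mul_rpow ha.le (pow_nonneg hq0 m), h2]
  have hpt : ∀ m : ℕ, |QFrac.Ileft q α f (a * q ^ m)|
      ≤ a ^ α / QFrac.qGamma q (α + 1) * M * (q ^ α) ^ m := by
    intro m
    rw [hIval m]
    have hC1 : (0:ℝ) ≤ (a * q ^ m) ^ (α - 1) / QFrac.qGamma q α :=
      div_nonneg (Real.rpow_nonneg (hx m).le _) hΓpos.le
    have hC2 : (0:ℝ) ≤ (1 - q) * (a * q ^ m) := mul_nonneg h1q.le (hx m).le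
    calc |(a * q ^ m) ^ (α - 1) / QFrac.qGamma q α * ((1 - q) * (a * q ^ m) *
          ∑' n : ℕ, q ^ n * (QFrac.poch q (q ^ (n + 1)) (α - 1) * f (a * q ^ m * q ^ n)))|
        = (a * q ^ m) ^ (α - 1) / QFrac.qGamma q α * ((1 - q) * (a * q ^ m) *
          |∑' n : ℕ, q ^ n * (QFrac.poch q (q ^ (n + 1)) (α - 1) * f (a * q ^ m * q ^ n))|) := by
          rw [abs_mul, abs_mul, abs_of_nonneg hC1, abs_of_nonneg hC2]
      _ ≤ (a * q ^ m) ^ (α - 1) / QFrac.qGamma q α * ((1 - q) * (a * q ^ m) *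
          (M / (1 - q ^ α))) :=
          mul_le_mul_of_nonneg_left (mul_le_mul_of_nonneg_left (htsum_bound m) hC2) hC1
      _ = ((a * q ^ m) ^ (α - 1) * (a * q ^ m)) *
          ((1 - q) * M / QFrac.qGamma q α / (1 - q ^ α)) := by ring
      _ = (a ^ α * (q ^ α) ^ m) * ((1 - q) * M / QFrac.qGamma q α / (1 - q ^ α)) := by
          rw [hrw m]
      _ = a ^ α / QFrac.qGamma q (α + 1) * M * (q ^ α) ^ m := by
          rw [hΓ1, div_div_eq_mul_div]
          simp only [div_mul_eq_div_div]
          ring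
  have hconst0 : 0 ≤ a ^ α / QFrac.qGamma q (α + 1) * M :=
    mul_nonneg (div_nonneg (Real.rpow_nonneg ha.le α) hΓ1pos.le) hM0
  have hble : ∀ m : ℕ, |QFrac.Ileft q α f (a * q ^ m)| ≤ a ^ α / QFrac.qGamma q (α + 1) * M := by
    intro m
    refine (hpt m).trans ?_
    have h6 : ((q:ℝ) ^ α) ^ m ≤ 1 := pow_le_one₀ hqα0.le hqα1.le
    nlinarith
  constructor
  · show Tendsto (fun n : ℕ => QFrac.Ileft q α f (a * q ^ n)) atTop
      (nhds (QFrac.Ileft q α f 0))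
    rw [hIzero]
    apply squeeze_zero_norm (a := fun m : ℕ => a ^ α / QFrac.qGamma q (α + 1) * M * (q ^ α) ^ m)
    · intro m; rw [Real.norm_eq_abs]; exact hpt m
    · simpa using (tendsto_pow_atTop_nhds_zero_of_lt_one hqα0.le hqα1).const_mul
        (a ^ α / QFrac.qGamma q (α + 1) * M)
  · show max (⨆ n : ℕ, |QFrac.Ileft q α f (a * q ^ n)|) |QFrac.Ileft q α f 0|
      ≤ a ^ α / QFrac.qGamma q (α + 1) * M
    apply max_le
    · exact ciSup_le hble
    · rw [hIzero, abs_zero]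
      exact hconst0
end
end
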